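/- arXiv:1109.6345 — 14 statements merged into one kernel-verified Lean document; each statement's English description precedes it below -/
import Mathlib

section
/- Every conditionally acyclic TCP-net N = ⟨V, cp, i, ci, cpt, cit⟩ contains at least one root variable, i.e., a variable X ∈ V such that for every Y ∈ V∖{X}: (Y,X) ∉ cp, (Y,X) ∉ i, and no ci-arc of N is incident to X. -/
universe u v

/-- A TCP-net over a set of variables `V` with domains `D`.
`cp` are the directed cp-arcs, `iarc` the directed i-arcs, `ci` the
(symmetric) ci-arcs with selector sets `sel`.  `cpt X o` is the strict
partial order on `D X` prescribed by the CPT of `X` given the values of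
the parents of `X` in `o` (it only depends on those values), and
`cit X Y o` means that the CIT of the ci-arc `(X,Y)` declares `X` more
important than `Y` on the restriction of `o` to the selector set
`sel X Y` (it only depends on those values). -/
structure TCPNet (V : Type u) (D : V → Type v) where
  cp : V → V → Prop
  iarc : V → V → Prop
  ci : V → V → Prop
  sel : V → V → Set V
  cpt : (X : V) → ((Y : V) → D Y) → D X → D X → Prop
  cit : V → V → ((Y : V) → D Y) → Prop
  cp_ne : ∀ X Y, cp X Y → X ≠ Y
  iarc_ne : ∀ X Y, iarc X Y → X ≠ Y
  ci_ne : ∀ X Y, ci X Y → X ≠ Y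
  ci_symm : ∀ X Y, ci X Y → ci Y X
  sel_symm : ∀ X Y, sel X Y = sel Y X
  sel_nonempty : ∀ X Y, ci X Y → (sel X Y).Nonempty
  sel_not_endpoint : ∀ X Y, ci X Y → X ∉ sel X Y ∧ Y ∉ sel X Y
  iarc_indep : ∀ X Y, iarc X Y → ¬ cp X Y ∧ ¬ cp Y X
  ci_indep : ∀ X Y, ci X Y → ¬ cp X Y ∧ ¬ cp Y X
  cpt_irrefl : ∀ X o a, ¬ cpt X o a a
  cpt_trans : ∀ X o a b c, cpt X o a b → cpt X o b c → cpt X o a c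
  cpt_local : ∀ X o o', (∀ Y, cp Y X → o Y = o' Y) → ∀ a b, (cpt X o a b ↔ cpt X o' a b)
  cit_ci : ∀ X Y o, cit X Y o → ci X Y
  cit_antisymm : ∀ X Y o, cit X Y o → ¬ cit Y X o
  cit_local : ∀ X Y o o', (∀ Z ∈ sel X Y, o Z = o' Z) → (cit X Y o ↔ cit X Y o')

variable {V : Type u} {D : V → Type v}

/-- A preference order: a strict partial order (irreflexive and transitive). -/
def IsPrefOrder {α : Sort*} (r : α → α → Prop) : Prop :=
  (∀ a, ¬ r a a) ∧ ∀ a b c, r a b → r b c → r a c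

/-- A preference order `pref` on outcomes satisfies the TCP-net `N`:
(i) it satisfies every CPT, (ii) every i-arc, and (iii) every CIT entry. -/
def TCPNet.Satisfies (N : TCPNet V D)
    (pref : ((X : V) → D X) → ((X : V) → D X) → Prop) : Prop :=
  (∀ (X : V) (o o' : (Y : V) → D Y),
      (∀ Y, Y ≠ X → o Y = o' Y) → N.cpt X o (o X) (o' X) → pref o o') ∧
  (∀ (X Y : V) (o o' : (Z : V) → D Z), N.iarc X Y →
      (∀ Z, Z ≠ X → Z ≠ Y → o Z = o' Z) → N.cpt X o (o X) (o' X) → pref o o') ∧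
  (∀ (X Y : V) (o o' : (Z : V) → D Z), N.cit X Y o →
      (∀ Z, Z ≠ X → Z ≠ Y → o Z = o' Z) → N.cpt X o (o X) (o' X) → pref o o')

def TCPNet.Satisfiable (N : TCPNet V D) : Prop :=
  ∃ pref, IsPrefOrder pref ∧ N.Satisfies pref

def TCPNet.Entails (N : TCPNet V D) (o o' : (X : V) → D X) : Prop :=
  ∀ pref, IsPrefOrder pref → N.Satisfies pref → pref o o'

/-- The directed edges of the dependency graph `N*`: cp-arcs, i-arcs, and
the edges from each selector variable of a ci-arc to the endpoints of that arc. -/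
def TCPNet.dirEdge (N : TCPNet V D) (X Y : V) : Prop :=
  N.cp X Y ∨ N.iarc X Y ∨ ∃ W, N.ci Y W ∧ X ∈ N.sel Y W

/-- The edges of the `w`-directed graph of `N*`. -/
def TCPNet.wEdge (N : TCPNet V D) (w : (X : V) → D X) (X Y : V) : Prop :=
  N.dirEdge X Y ∨ N.cit X Y w

/-- Conditional acyclicity: every `w`-directed graph of `N*` is acyclic. -/
def TCPNet.CondAcyclic (N : TCPNet V D) : Prop :=
  ∀ (w : (X : V) → D X) (X : V), ¬ Relation.TransGen (N.wEdge w) X X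

/-- every conditionally acyclic TCP-net contains a root
variable, i.e. one with no incoming cp-arc, no incoming i-arc, and no
incident ci-arc. -/
theorem stmt2 [Fintype V] [Nonempty V] [∀ X, Fintype (D X)] [∀ X, Nontrivial (D X)]
    (N : TCPNet V D) (hN : N.CondAcyclic) :
    ∃ X : V, ∀ Y : V, Y ≠ X → ¬ N.cp Y X ∧ ¬ N.iarc Y X ∧ ¬ N.ci X Y := by
  classical
  let w : (X : V) → D X := fun X => Classical.arbitrary (D X)
  let r : V → V → Prop := Relation.TransGen (N.wEdge w)
  have hirr : IsIrrefl V r := ⟨fun x => hN w x⟩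
  have htr : IsTrans V r := ⟨fun a b c => Relation.TransGen.trans⟩
  have hwf : WellFounded r := Finite.wellFounded_of_trans_of_irrefl r
  obtain ⟨X, -, hmin⟩ := hwf.has_min Set.univ ⟨Classical.arbitrary V, trivial⟩
  have hnoin : ∀ Y, ¬ N.wEdge w Y X := fun Y h =>
    hmin Y trivial (Relation.TransGen.single h)
  refine ⟨X, fun Y _ => ⟨?_, ?_, ?_⟩⟩
  · exact fun h => hnoin Y (Or.inl (Or.inl h))
  · exact fun h => hnoin Y (Or.inl (Or.inr (Or.inl h)))
  · intro h
    obtain ⟨Z, hZ⟩ := N.sel_nonempty X Y h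
    exact hnoin Z (Or.inl (Or.inr (Or.inr ⟨Y, h, hZ⟩)))
end

section
/- Every conditionally acyclic TCP-net is satisfiable; moreover, every conditionally acyclic TCP-net N is satisfied by some strict total order on D(V). -/
set_option linter.unusedSectionVars false


universe u v

variable {V : Type u} {D : V → Type v}

/-! ### Auxiliary machinery for the proof -/

/-- Szpilrajn-type extension: every strict partial order extends to a strict total order. -/
lemma exists_linext {α : Type*} (c : α → α → Prop) (hirr : ∀ a, ¬ c a a)
    (htr : ∀ a b d, c a b → c b d → c a d) :
    ∃ s : α → α → Prop, (∀ a b, c a b → s a b) ∧ (∀ a, ¬ s a a) ∧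
      (∀ a b d, s a b → s b d → s a d) ∧ (∀ a b, a ≠ b → s a b ∨ s b a) := by
  let r : α → α → Prop := fun a b => c a b ∨ a = b
  haveI : IsPartialOrder α r := {
    refl := fun a => Or.inr rfl
    trans := by
      rintro a b d (h1 | rfl) (h2 | rfl)
      · exact Or.inl (htr _ _ _ h1 h2)
      · exact Or.inl h1
      · exact Or.inl h2
      · exact Or.inr rfl
    antisymm := by
      rintro a b (h1 | h1) (h2 | h2)
      · exact absurd (htr _ _ _ h1 h2) (hirr a)
      · exact h2.symm
      · exact h1
      · exact h1 }
  obtain ⟨s, hs, hrs⟩ := extend_partialOrder r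
  haveI := hs
  refine ⟨fun a b => s a b ∧ a ≠ b, ?_, ?_, ?_, ?_⟩
  · intro a b hab
    refine ⟨hrs _ _ (Or.inl hab), ?_⟩
    rintro rfl; exact hirr a hab
  · rintro a ⟨_, h⟩; exact h rfl
  · rintro a b d ⟨h1, hne1⟩ ⟨h2, hne2⟩
    refine ⟨IsTrans.trans _ _ _ h1 h2, ?_⟩
    rintro rfl
    exact hne1 (Std.Antisymm.antisymm _ _ h1 h2)
  · intro a b hne
    rcases Std.Total.total (r := s) a b with h | h
    · exact Or.inl ⟨h, hne⟩
    · exact Or.inr ⟨h, hne.symm⟩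

section Machinery

variable [Fintype V] [∀ X, Nonempty (D X)] [Nonempty V] [DecidableEq V]
variable (N : TCPNet V D)

/-- Extend a partial assignment on `U` to a full outcome (junk elsewhere). -/
noncomputable def extendU (U : Finset V) (u : ∀ W : {W : V // W ∈ U}, D W.1) : ∀ X, D X :=
  fun X => if h : X ∈ U then u ⟨X, h⟩ else Classical.arbitrary (D X)

/-- Restriction of an outcome to `U`. -/
def restrT (o : ∀ X, D X) (U : Finset V) : ∀ W : {W : V // W ∈ U}, D W.1 := fun W => o W.1

/-- `Z` is eligible as the next variable given the processed set `U` with values `u`. -/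
def Elig (U : Finset V) (u : ∀ W : {W : V // W ∈ U}, D W.1) (Z : V) : Prop :=
  (∀ W, N.dirEdge W Z → W ∈ U) ∧ ∀ W, N.cit W Z (extendU U u) → W ∈ U

lemma sel_dirEdge {X Z : V} (h : N.ci X Z) {W : V} (hW : W ∈ N.sel X Z) :
    N.dirEdge W Z :=
  Or.inr (Or.inr ⟨X, N.ci_symm _ _ h, by rwa [N.sel_symm Z X]⟩)

lemma extendU_restr (o : ∀ X, D X) (U : Finset V) {W : V} (hW : W ∈ U) :
    extendU U (restrT o U) W = o W := dif_pos hW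

lemma elig_iff (o : ∀ X, D X) (U : Finset V) (Z : V) :
    Elig N U (restrT o U) Z ↔ ∀ W, N.wEdge o W Z → W ∈ U := by
  constructor
  · rintro ⟨h1, h2⟩ W hw
    rcases hw with hd | hc
    · exact h1 W hd
    · refine h2 W ?_
      have hci := N.cit_ci W Z o hc
      exact (N.cit_local W Z (extendU U (restrT o U)) o
        (fun s hs => extendU_restr o U (h1 s (sel_dirEdge N hci hs)))).mpr hc
  · intro h
    refine ⟨fun W hd => h W (Or.inl hd), fun W hc => ?_⟩
    have hci := N.cit_ci W Z _ hc
    have hsel : ∀ s ∈ N.sel W Z, s ∈ U := fun s hs =>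
      h s (Or.inl (sel_dirEdge N hci hs))
    exact h W (Or.inr ((N.cit_local W Z (extendU U (restrT o U)) o
      (fun s hs => extendU_restr o U (hsel s hs))).mp hc))

lemma exists_elig (hN : N.CondAcyclic) (o : ∀ X, D X) {U : Finset V}
    (hU : U ≠ Finset.univ) : ∃ Z, Z ∉ U ∧ Elig N U (restrT o U) Z := by
  haveI : IsTrans V (Relation.TransGen (N.wEdge o)) :=
    ⟨fun _ _ _ => Relation.TransGen.trans⟩
  haveI : IsIrrefl V (Relation.TransGen (N.wEdge o)) := ⟨hN o⟩
  have hwf := Finite.wellFounded_of_trans_of_irrefl (Relation.TransGen (N.wEdge o))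
  have hne : {Z : V | Z ∉ U}.Nonempty := by
    by_contra h
    refine hU (Finset.eq_univ_iff_forall.mpr fun Z => ?_)
    by_contra hZ
    exact h ⟨Z, hZ⟩
  obtain ⟨Z, hZ, hmin⟩ := hwf.has_min _ hne
  refine ⟨Z, hZ, (elig_iff N o U Z).mpr ?_⟩
  intro W hw
  by_contra hWU
  exact hmin W hWU (Relation.TransGen.single hw)

open Classical in
/-- The next variable to process. -/
noncomputable def nxt (U : Finset V) (u : ∀ W : {W : V // W ∈ U}, D W.1) : V :=
  if h : ∃ Z, Z ∉ U ∧ Elig N U u Z then h.choose else Classical.arbitrary V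

/-- The increasing sequence of processed variable sets, given an outcome `o`. -/
noncomputable def Useq (o : ∀ X, D X) : ℕ → Finset V
  | 0 => ∅
  | k+1 => insert (nxt N (Useq o k) (restrT o (Useq o k))) (Useq o k)

/-- The `k`-th processed variable, given an outcome `o`. -/
noncomputable def Xseq (o : ∀ X, D X) (k : ℕ) : V :=
  nxt N (Useq N o k) (restrT o (Useq N o k))

lemma Useq_succ (o : ∀ X, D X) (k : ℕ) :
    Useq N o (k+1) = insert (Xseq N o k) (Useq N o k) := rfl

lemma Useq_mono (o : ∀ X, D X) {j k : ℕ} (h : j ≤ k) : Useq N o j ⊆ Useq N o k := by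
  induction k with
  | zero => rw [Nat.le_zero.mp h]
  | succ k ih =>
    rcases Nat.le_succ_iff.mp h with h' | rfl
    · exact (ih h').trans (by rw [Useq_succ]; exact Finset.subset_insert _ _)
    · rfl

lemma Useq_eq_image (o : ∀ X, D X) (k : ℕ) :
    Useq N o k = (Finset.range k).image (Xseq N o) := by
  induction k with
  | zero => simp [Useq]
  | succ k ih => rw [Useq_succ, Finset.range_add_one, Finset.image_insert, ih]

lemma mem_Useq (o : ∀ X, D X) (k : ℕ) (W : V) :
    W ∈ Useq N o k ↔ ∃ j < k, Xseq N o j = W := by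
  rw [Useq_eq_image]
  simp [Finset.mem_image]

lemma Xseq_spec (hN : N.CondAcyclic) (o : ∀ X, D X) {k : ℕ}
    (h : Useq N o k ≠ Finset.univ) :
    Xseq N o k ∉ Useq N o k ∧
      Elig N (Useq N o k) (restrT o (Useq N o k)) (Xseq N o k) := by
  have hex := exists_elig N hN o (U := Useq N o k) h
  unfold Xseq nxt
  rw [dif_pos hex]
  exact hex.choose_spec

lemma Useq_card (hN : N.CondAcyclic) (o : ∀ X, D X) :
    ∀ k ≤ Fintype.card V, (Useq N o k).card = k := by
  intro k
  induction k with
  | zero => intro _; rfl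
  | succ k ih =>
    intro hk
    have hcard := ih (Nat.le_of_succ_le hk)
    have hne : Useq N o k ≠ Finset.univ := by
      intro h; rw [h, Finset.card_univ] at hcard; omega
    rw [Useq_succ, Finset.card_insert_of_notMem (Xseq_spec N hN o hne).1, hcard]

lemma Useq_ne_top (hN : N.CondAcyclic) (o : ∀ X, D X) {k : ℕ}
    (hk : k < Fintype.card V) : Useq N o k ≠ Finset.univ := by
  intro h
  have := Useq_card N hN o k hk.le
  rw [h, Finset.card_univ] at this
  omega

lemma exists_pos (hN : N.CondAcyclic) (o : ∀ X, D X) (W : V) :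
    ∃ k < Fintype.card V, Xseq N o k = W := by
  have : W ∈ Useq N o (Fintype.card V) := by
    rw [Finset.eq_univ_of_card _ (Useq_card N hN o _ le_rfl)]
    exact Finset.mem_univ W
  exact (mem_Useq N o _ W).mp this

lemma elig_at (hN : N.CondAcyclic) (o : ∀ X, D X) {k : ℕ}
    (hk : k < Fintype.card V) :
    ∀ W, N.wEdge o W (Xseq N o k) → W ∈ Useq N o k :=
  (elig_iff N o _ _).mp (Xseq_spec N hN o (Useq_ne_top N hN o hk)).2

lemma Xseq_not_mem (hN : N.CondAcyclic) (o : ∀ X, D X) {k : ℕ}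
    (hk : k < Fintype.card V) : Xseq N o k ∉ Useq N o k :=
  (Xseq_spec N hN o (Useq_ne_top N hN o hk)).1

lemma Xseq_congr (o o' : ∀ X, D X) {k : ℕ} (hU : Useq N o k = Useq N o' k)
    (hv : ∀ W ∈ Useq N o k, o W = o' W) : Xseq N o k = Xseq N o' k := by
  unfold Xseq
  rw [← hU]
  congr 1
  funext W
  exact hv W.1 W.2

lemma agree_seq (o o' : ∀ X, D X) :
    ∀ k, (∀ j < k, o (Xseq N o j) = o' (Xseq N o j)) →
      Useq N o k = Useq N o' k ∧ ∀ j ≤ k, Xseq N o j = Xseq N o' j := by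
  intro k
  induction k with
  | zero =>
    intro _
    refine ⟨rfl, fun j hj => ?_⟩
    rw [Nat.le_zero.mp hj]
    exact Xseq_congr N o o' rfl (fun W hW => absurd hW (Finset.notMem_empty W))
  | succ k ih =>
    intro h
    obtain ⟨hU, hX⟩ := ih (fun j hj => h j (hj.trans (Nat.lt_succ_self k)))
    have hv : ∀ W ∈ Useq N o (k+1), o W = o' W := by
      intro W hW
      obtain ⟨j, hj, rfl⟩ := (mem_Useq N o _ W).mp hW
      exact h j hj
    have hXk : Xseq N o k = Xseq N o' k :=
      Xseq_congr N o o' hU (fun W hW => hv W (Useq_mono N o (Nat.le_succ k) hW))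
    have hU' : Useq N o (k+1) = Useq N o' (k+1) := by
      rw [Useq_succ, Useq_succ, hU, hXk]
    refine ⟨hU', fun j hj => ?_⟩
    rcases Nat.le_succ_iff.mp hj with h' | rfl
    · exact hX j h'
    · exact Xseq_congr N o o' hU' hv

open Classical in
/-- A canonical strict total order on `D X` extending the CPT order,
depending only on the values of the parents of `X`. -/
noncomputable def lin (X : V) (p : ∀ Y : {Y : V // N.cp Y X}, D Y.1) :
    D X → D X → Prop :=
  (exists_linext
    (N.cpt X (fun Y => if h : N.cp Y X then p ⟨Y, h⟩ else Classical.arbitrary (D Y)))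
    (N.cpt_irrefl X _) (N.cpt_trans X _)).choose

open Classical in
lemma lin_props (X : V) (p : ∀ Y : {Y : V // N.cp Y X}, D Y.1) :
    (∀ a b, N.cpt X
        (fun Y => if h : N.cp Y X then p ⟨Y, h⟩ else Classical.arbitrary (D Y)) a b →
        lin N X p a b) ∧
    (∀ a, ¬ lin N X p a a) ∧
    (∀ a b d, lin N X p a b → lin N X p b d → lin N X p a d) ∧
    (∀ a b, a ≠ b → lin N X p a b ∨ lin N X p b a) :=
  (exists_linext
    (N.cpt X (fun Y => if h : N.cp Y X then p ⟨Y, h⟩ else Classical.arbitrary (D Y)))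
    (N.cpt_irrefl X _) (N.cpt_trans X _)).choose_spec

/-- The canonical strict total order on `D X` in the context of outcome `o`. -/
noncomputable def linO (X : V) (o : ∀ Y, D Y) : D X → D X → Prop :=
  lin N X (fun Y => o Y.1)

open Classical in
lemma linO_ext {X : V} {o : ∀ Y, D Y} {a b : D X} (h : N.cpt X o a b) :
    linO N X o a b := by
  refine (lin_props N X (fun Y => o Y.1)).1 a b ?_
  exact (N.cpt_local X o _ (fun Y hY => by rw [dif_pos hY]) a b).mp h

lemma linO_local {X : V} {o o' : ∀ Y, D Y} (h : ∀ Y, N.cp Y X → o Y = o' Y) :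
    linO N X o = linO N X o' := by
  have he : (fun Y : {Y : V // N.cp Y X} => o Y.1) =
      (fun Y : {Y : V // N.cp Y X} => o' Y.1) :=
    funext fun Y => h Y.1 Y.2
  unfold linO
  rw [he]

lemma linO_irrefl (X : V) (o : ∀ Y, D Y) (a : D X) : ¬ linO N X o a a :=
  (lin_props N X (fun Y => o Y.1)).2.1 a

lemma linO_trans {X : V} {o : ∀ Y, D Y} {a b d : D X}
    (h1 : linO N X o a b) (h2 : linO N X o b d) : linO N X o a d :=
  (lin_props N X (fun Y => o Y.1)).2.2.1 a b d h1 h2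

lemma linO_total (X : V) (o : ∀ Y, D Y) (a b : D X) (h : a ≠ b) :
    linO N X o a b ∨ linO N X o b a :=
  (lin_props N X (fun Y => o Y.1)).2.2.2 a b h

/-- The constructed preference order: lexicographic comparison along the
dynamically chosen variable order. -/
def Pref (o o' : ∀ X, D X) : Prop :=
  ∃ k, (∀ j < k, o (Xseq N o j) = o' (Xseq N o j)) ∧
    linO N (Xseq N o k) o (o (Xseq N o k)) (o' (Xseq N o k))

lemma witness_lt (hN : N.CondAcyclic) {o o' : ∀ X, D X} {k : ℕ}
    (h1 : ∀ j < k, o (Xseq N o j) = o' (Xseq N o j))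
    (h2 : linO N (Xseq N o k) o (o (Xseq N o k)) (o' (Xseq N o k))) :
    k < Fintype.card V := by
  by_contra hk
  push_neg at hk
  have hall : ∀ W, o W = o' W := by
    intro W
    obtain ⟨j, hj, rfl⟩ := exists_pos N hN o W
    exact h1 j (lt_of_lt_of_le hj hk)
  rw [← hall (Xseq N o k)] at h2
  exact linO_irrefl N _ o _ h2

lemma linO_congr (hN : N.CondAcyclic) {o o' : ∀ X, D X} {k : ℕ}
    (hk : k < Fintype.card V) (hagr : ∀ W ∈ Useq N o k, o W = o' W) :
    linO N (Xseq N o k) o = linO N (Xseq N o k) o' :=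
  linO_local N (fun Y hY => hagr Y (elig_at N hN o hk Y (Or.inl (Or.inl hY))))

lemma pref_irrefl (o : ∀ X, D X) : ¬ Pref N o o := by
  rintro ⟨k, _, hl⟩
  exact linO_irrefl N _ o _ hl

lemma pref_trans (hN : N.CondAcyclic) {o o' o'' : ∀ X, D X}
    (h : Pref N o o') (h' : Pref N o' o'') : Pref N o o'' := by
  obtain ⟨k, hp, hl⟩ := h
  obtain ⟨k', hp', hl'⟩ := h'
  have hkn := witness_lt N hN hp hl
  have hkn' := witness_lt N hN hp' hl'
  have hseq : ∀ m ≤ k, Useq N o m = Useq N o' m ∧ ∀ j ≤ m, Xseq N o j = Xseq N o' j :=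
    fun m hm => agree_seq N o o' m (fun j hj => hp j (lt_of_lt_of_le hj hm))
  rcases lt_trichotomy k k' with hlt | rfl | hgt
  · refine ⟨k, ?_, ?_⟩
    · intro j hj
      have hx := (hseq k le_rfl).2 j hj.le
      rw [hp j hj, hx]
      exact hp' j (hj.trans hlt)
    · have hx := (hseq k le_rfl).2 k le_rfl
      have he : o'' (Xseq N o k) = o' (Xseq N o k) := by
        rw [hx]; exact (hp' k hlt).symm
      rw [he]; exact hl
  · -- k = k'
    have hx := (hseq k le_rfl).2 k le_rfl
    have hcongr : linO N (Xseq N o' k) o' = linO N (Xseq N o' k) o := by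
      apply linO_congr N hN hkn'
      intro W hW
      obtain ⟨j, hj, rfl⟩ := (mem_Useq N o' k _).mp hW
      have hxj := (hseq k le_rfl).2 j hj.le
      rw [← hxj]
      exact (hp j hj).symm
    refine ⟨k, ?_, ?_⟩
    · intro j hj
      have hxj := (hseq k le_rfl).2 j hj.le
      rw [hp j hj, hxj]
      exact hp' j hj
    · rw [hcongr] at hl'
      rw [← hx] at hl'
      exact linO_trans N hl hl'
  · refine ⟨k', ?_, ?_⟩
    · intro j hj
      have hxj := (hseq k le_rfl).2 j (hj.trans hgt).le
      rw [hp j (hj.trans hgt), hxj]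
      exact hp' j hj
    · have hx := (hseq k le_rfl).2 k' hgt.le
      have hcongr : linO N (Xseq N o' k') o' = linO N (Xseq N o' k') o := by
        apply linO_congr N hN hkn'
        intro W hW
        obtain ⟨j, hj, rfl⟩ := (mem_Useq N o' k' _).mp hW
        have hxj := (hseq k le_rfl).2 j (hj.trans hgt).le
        rw [← hxj]
        exact (hp j (hj.trans hgt)).symm
      rw [hcongr] at hl'
      rw [← hx] at hl'
      rw [← hp k' hgt] at hl'
      exact hl'

lemma pref_total (hN : N.CondAcyclic) {o o' : ∀ X, D X} (hne : o ≠ o') :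
    Pref N o o' ∨ Pref N o' o := by
  classical
  have hW : ∃ W, o W ≠ o' W := Function.ne_iff.mp hne
  obtain ⟨W, hWne⟩ := hW
  obtain ⟨k0, hk0, rfl⟩ := exists_pos N hN o W
  have hex : ∃ k, o (Xseq N o k) ≠ o' (Xseq N o k) := ⟨k0, hWne⟩
  set k := Nat.find hex with hkdef
  have hkdiff := Nat.find_spec hex
  have hpre : ∀ j < k, o (Xseq N o j) = o' (Xseq N o j) := fun j hj =>
    not_not.mp (Nat.find_min hex hj)
  have hkn : k < Fintype.card V := lt_of_le_of_lt (Nat.find_min' hex hWne) hk0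
  rcases linO_total N (Xseq N o k) o _ _ hkdiff with h | h
  · exact Or.inl ⟨k, hpre, h⟩
  · right
    obtain ⟨hU, hX⟩ := agree_seq N o o' k hpre
    have hxk := hX k le_rfl
    have hcongr : linO N (Xseq N o k) o = linO N (Xseq N o k) o' := by
      apply linO_congr N hN hkn
      intro W' hW'
      obtain ⟨j, hj, rfl⟩ := (mem_Useq N o k _).mp hW'
      exact hpre j hj
    refine ⟨k, ?_, ?_⟩
    · intro j hj
      rw [← hX j hj.le]
      exact (hpre j hj).symm
    · rw [← hxk, ← hcongr]
      exact h

lemma pref_sat1 (hN : N.CondAcyclic) {X : V} {o o' : ∀ Y, D Y}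
    (hagree : ∀ Y, Y ≠ X → o Y = o' Y) (hc : N.cpt X o (o X) (o' X)) :
    Pref N o o' := by
  obtain ⟨k, hk, hXk⟩ := exists_pos N hN o X
  have hXnot : X ∉ Useq N o k := hXk ▸ Xseq_not_mem N hN o hk
  refine ⟨k, ?_, ?_⟩
  · intro j hj
    apply hagree
    intro he
    refine hXnot ?_
    rw [← he]
    exact Useq_mono N o (Nat.succ_le_of_lt hj)
      (by rw [Useq_succ]; exact Finset.mem_insert_self _ _)
  · rw [hXk]
    exact linO_ext N hc

lemma pref_sat2 (hN : N.CondAcyclic) {X Y : V} {o o' : ∀ Z, D Z}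
    (hW : N.wEdge o X Y)
    (hagree : ∀ Z, Z ≠ X → Z ≠ Y → o Z = o' Z) (hc : N.cpt X o (o X) (o' X)) :
    Pref N o o' := by
  obtain ⟨k, hk, hXk⟩ := exists_pos N hN o X
  have hXnot : X ∉ Useq N o k := hXk ▸ Xseq_not_mem N hN o hk
  have hYnot : Y ∉ Useq N o k := by
    intro hY
    obtain ⟨j, hj, hYj⟩ := (mem_Useq N o k Y).mp hY
    have hXin : X ∈ Useq N o j := by
      refine elig_at N hN o (hj.trans hk) X ?_
      rw [hYj]; exact hW
    exact hXnot (Useq_mono N o hj.le hXin)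
  refine ⟨k, ?_, ?_⟩
  · intro j hj
    have hmem : Xseq N o j ∈ Useq N o k :=
      Useq_mono N o (Nat.succ_le_of_lt hj)
        (by rw [Useq_succ]; exact Finset.mem_insert_self _ _)
    refine hagree _ ?_ ?_
    · intro he; rw [he] at hmem; exact hXnot hmem
    · intro he; rw [he] at hmem; exact hYnot hmem
  · rw [hXk]
    exact linO_ext N hc

end Machinery


/-- every conditionally acyclic TCP-net is satisfiable;
moreover, it is satisfied by some strict total order on the outcomes. -/
theorem stmt3 [Fintype V] [∀ X, Fintype (D X)] [∀ X, Nontrivial (D X)]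
    (N : TCPNet V D) (hN : N.CondAcyclic) :
    N.Satisfiable ∧
      ∃ pref : ((X : V) → D X) → ((X : V) → D X) → Prop,
        IsPrefOrder pref ∧ (∀ o o', o ≠ o' → pref o o' ∨ pref o' o) ∧
        N.Satisfies pref := by
  classical
  cases isEmpty_or_nonempty V with
  | inl hV =>
    have hpo : IsPrefOrder (fun (_ _ : ∀ X, D X) => False) :=
      ⟨fun _ h => h, fun _ _ _ h _ => h⟩
    have hsat : N.Satisfies (fun _ _ => False) :=
      ⟨fun X => isEmptyElim X, fun X => isEmptyElim X, fun X => isEmptyElim X⟩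
    have htot : ∀ o o' : ∀ X, D X, o ≠ o' → False ∨ False := by
      intro o o' hne
      exact absurd (funext fun X => isEmptyElim X) hne
    exact ⟨⟨_, hpo, hsat⟩, _, hpo, htot, hsat⟩
  | inr hV =>
    have hpo : IsPrefOrder (Pref N) :=
      ⟨pref_irrefl N, fun _ _ _ h h' => pref_trans N hN h h'⟩
    have hsat : N.Satisfies (Pref N) := by
      refine ⟨?_, ?_, ?_⟩
      · intro X o o' hagree hc
        exact pref_sat1 N hN hagree hc
      · intro X Y o o' hi hagree hc
        exact pref_sat2 N hN (Or.inl (Or.inr (Or.inl hi))) hagree hc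
      · intro X Y o o' hcit hagree hc
        exact pref_sat2 N hN (Or.inr hcit) hagree hc
    have htot : ∀ o o' : ∀ X, D X, o ≠ o' → Pref N o o' ∨ Pref N o' o :=
      fun o o' hne => pref_total N hN hne
    exact ⟨⟨_, hpo, hsat⟩, _, hpo, htot, hsat⟩
end

section
/- Let V = {A, B, C} with D(A) = {a, ā}, D(B) = {b, b̄}, D(C) = {c, c̄}, and let N be the TCP-net with cp = {(A,C)}, i = ∅, and ci = {(A,B)} with selector set S(A,B) = {C}; CPT(A): a ≻ ā; CPT(B): b ≻ b̄; CPT(C): given A = a, c̄ ≻ c, and given A = ā, c ≻ c̄; CIT(A,B): given C = c, A is more important than B, and given C = c̄, B is more important than A. Then no strict partial order on D(V) satisfies N, i.e., N is unsatisfiable (even though every way of orienting the ci-arc makes the graph of N itself acyclic). -/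
universe u v

variable {V : Type u} {D : V → Type v}

/-- the concrete TCP-net over the boolean variables
`A = 0`, `B = 1`, `C = 2` with cp-arc `(A,C)`, ci-arc `(A,B)` with selector
`{C}`, CPTs `a ≻ ā`, `b ≻ b̄`, `(a : c̄ ≻ c, ā : c ≻ c̄)` and CIT
`(c : A ▷ B, c̄ : B ▷ A)` is unsatisfiable (here `a, b, c` are encoded by
`true` and `ā, b̄, c̄` by `false`). -/
theorem stmt4 (N : TCPNet (Fin 3) (fun _ => Bool))
    (hcp : ∀ X Y, N.cp X Y ↔ X = 0 ∧ Y = 2)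
    (hi : ∀ X Y, ¬ N.iarc X Y)
    (hci : ∀ X Y, N.ci X Y ↔ (X = 0 ∧ Y = 1) ∨ (X = 1 ∧ Y = 0))
    (hsel01 : N.sel 0 1 = {2})
    (hsel10 : N.sel 1 0 = {2})
    (hcptA : ∀ o a b, N.cpt 0 o a b ↔ a = true ∧ b = false)
    (hcptB : ∀ o a b, N.cpt 1 o a b ↔ a = true ∧ b = false)
    (hcptC : ∀ o a b, N.cpt 2 o a b ↔
      ((o 0 = true ∧ a = false ∧ b = true) ∨ (o 0 = false ∧ a = true ∧ b = false)))
    (hcitAB : ∀ o, N.cit 0 1 o ↔ o 2 = true)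
    (hcitBA : ∀ o, N.cit 1 0 o ↔ o 2 = false)
    (hcitOther : ∀ X Y o, N.cit X Y o → (X = 0 ∧ Y = 1) ∨ (X = 1 ∧ Y = 0)) :
    ¬ N.Satisfiable := by
  rintro ⟨pref, ⟨hirr, htrans⟩, h1, h2, h3⟩
  set o1 : (X : Fin 3) → Bool := ![true, false, true] with ho1
  set o2 : (X : Fin 3) → Bool := ![false, true, true] with ho2
  set o3 : (X : Fin 3) → Bool := ![false, true, false] with ho3
  set o4 : (X : Fin 3) → Bool := ![true, false, false] with ho4
  have p12 : pref o1 o2 := by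
    apply h3 0 1 o1 o2 ((hcitAB o1).mpr rfl)
    · intro Z hZ0 hZ1; fin_cases Z
      · exact absurd rfl hZ0
      · exact absurd rfl hZ1
      · rfl
    · exact (hcptA o1 (o1 0) (o2 0)).mpr ⟨rfl, rfl⟩
  have p23 : pref o2 o3 := by
    apply h1 2 o2 o3
    · intro Z hZ; fin_cases Z
      · rfl
      · rfl
      · exact absurd rfl hZ
    · exact (hcptC o2 (o2 2) (o3 2)).mpr (Or.inr ⟨rfl, rfl, rfl⟩)
  have p34 : pref o3 o4 := by
    apply h3 1 0 o3 o4 ((hcitBA o3).mpr rfl)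
    · intro Z hZ1 hZ0; fin_cases Z
      · exact absurd rfl hZ0
      · exact absurd rfl hZ1
      · rfl
    · exact (hcptB o3 (o3 1) (o4 1)).mpr ⟨rfl, rfl⟩
  have p41 : pref o4 o1 := by
    apply h1 2 o4 o1
    · intro Z hZ; fin_cases Z
      · rfl
      · rfl
      · exact absurd rfl hZ
    · exact (hcptC o4 (o4 2) (o1 2)).mpr (Or.inl ⟨rfl, rfl, rfl⟩)
  exact hirr o1 (htrans _ _ _ (htrans _ _ _ (htrans _ _ _ p12 p23) p34) p41)
end

section
/- Let N be a TCP-net whose dependency graph N* contains no directed cycle consisting solely of its directed edges. Then N is conditionally acyclic if and only if every semi-directed cycle of N* is conditionally acyclic. -/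
universe u v

variable {V : Type u} {D : V → Type v}

/-- The cyclic successor on `Fin n`. -/
def finNext {n : ℕ} (i : Fin n) : Fin n := ⟨(i.val + 1) % n, Nat.mod_lt _ i.pos⟩

/-- `v`, `ed` describe a semi-directed cycle of the dependency graph of `N`:
`v` lists the vertices of a simple cycle (in the traversal direction, which is
the direction of the cycle if it contains directed edges), and `ed i` tells
whether the edge from `v i` to `v (i+1)` is a directed edge of `N*` (`true`),
or a ci-arc (`false`).  Not all edges are directed, and all directed edges
point in the traversal direction. -/
def IsSemiDirCycle (N : TCPNet V D) {n : ℕ} (v : Fin n → V) (ed : Fin n → Bool) : Prop :=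
  2 ≤ n ∧ Function.Injective v ∧
    (∀ i, ed i = true → N.dirEdge (v i) (v (finNext i))) ∧
    (∀ i, ed i = false → N.ci (v i) (v (finNext i))) ∧
    (∃ i, ed i = false)

/-- The semi-directed cycle `(v, ed)` is conditionally directed: some assignment
orients all its ci-arcs so that it becomes a directed cycle (all edges in the
traversal direction or, when all edges are ci-arcs, possibly all in the
opposite direction). -/
def CondDirected (N : TCPNet V D) {n : ℕ} (v : Fin n → V) (ed : Fin n → Bool) : Prop :=
  ∃ w : (X : V) → D X,
    (∀ i, ed i = false → N.cit (v i) (v (finNext i)) w) ∨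
    ((∀ i, ed i = false) ∧ ∀ i, N.cit (v (finNext i)) (v i) w)

section Aux

variable {α : Type*} {r : α → α → Prop}

lemma chainNat (u : ℕ → α) (h : ∀ i, r (u i) (u (i + 1))) :
    ∀ k, Relation.TransGen r (u 0) (u (k + 1)) := by
  intro k
  induction k with
  | zero => exact .single (h 0)
  | succ k ih => exact ih.tail (h (k + 1))

lemma cycleOfFin {n : ℕ} (hn : 0 < n) (v : Fin n → α)
    (h : ∀ i, r (v i) (v (finNext i))) :
    Relation.TransGen r (v ⟨0, hn⟩) (v ⟨0, hn⟩) := by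
  set u : ℕ → α := fun k => v ⟨k % n, Nat.mod_lt _ hn⟩ with hu
  have hstep : ∀ k, r (u k) (u (k + 1)) := by
    intro k
    have := h ⟨k % n, Nat.mod_lt _ hn⟩
    have he : finNext (⟨k % n, Nat.mod_lt _ hn⟩ : Fin n) = ⟨(k + 1) % n, Nat.mod_lt _ hn⟩ := by
      simp [finNext, Nat.mod_add_mod]
    rw [he] at this
    exact this
  have := chainNat u hstep (n - 1)
  have hn' : n - 1 + 1 = n := Nat.succ_pred_eq_of_pos hn
  rw [hn'] at this
  have h0 : u 0 = v ⟨0, hn⟩ := by simp [hu]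
  have hnn : u n = v ⟨0, hn⟩ := by simp [hu, Nat.mod_self]
  rwa [h0, hnn] at this

lemma transGen_walk {a b : α} (h : Relation.TransGen r a b) :
    ∃ k, 1 ≤ k ∧ ∃ f : ℕ → α, f 0 = a ∧ f k = b ∧ ∀ i < k, r (f i) (f (i + 1)) := by
  induction h with
  | @single b hab =>
    refine ⟨1, le_refl 1, fun i => if i = 0 then a else b, by simp, by simp, ?_⟩
    intro i hi
    interval_cases i
    simpa using hab
  | @tail b c hab hbc ih =>
    obtain ⟨k, hk, f, hf0, hfk, hstep⟩ := ih
    refine ⟨k + 1, by omega, fun i => if i ≤ k then f i else c, by simp [hf0], by simp, ?_⟩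
    intro i hi
    rcases Nat.lt_or_ge i k with hik | hik
    · show r (if i ≤ k then f i else c) (if i + 1 ≤ k then f (i + 1) else c)
      rw [if_pos (le_of_lt hik), if_pos (show i + 1 ≤ k from hik)]
      exact hstep i hik
    · have hieq : i = k := by omega
      subst hieq
      show r (if i ≤ i then f i else c) (if i + 1 ≤ i then f (i + 1) else c)
      rw [if_pos (le_refl i), if_neg (by omega : ¬ i + 1 ≤ i), hfk]
      exact hbc

lemma simple_cycle (hirr : ∀ x, ¬ r x x) {X : α} (h : Relation.TransGen r X X) :
    ∃ n, 2 ≤ n ∧ ∃ v : Fin n → α, Function.Injective v ∧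
      ∀ i, r (v i) (v (finNext i)) := by
  classical
  obtain ⟨k, hk, f, hf0, hfk, hstep⟩ := transGen_walk h
  have hex : ∃ m, 1 ≤ m ∧ ∃ g : ℕ → α, g 0 = g m ∧ ∀ i < m, r (g i) (g (i + 1)) :=
    ⟨k, hk, f, by rw [hf0, hfk], hstep⟩
  set n := Nat.find hex with hn
  obtain ⟨hn1, g, hg0, hgstep⟩ := Nat.find_spec hex
  rw [← hn] at hn1 hg0 hgstep
  have hmin : ∀ m, m < n → ¬ (1 ≤ m ∧ ∃ g : ℕ → α, g 0 = g m ∧ ∀ i < m, r (g i) (g (i + 1))) :=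
    fun m hm => Nat.find_min hex hm
  have hn2 : 2 ≤ n := by
    rcases Nat.lt_or_ge n 2 with h2 | h2
    · exfalso
      have hneq : n = 1 := by omega
      have := hgstep 0 (by omega)
      rw [hneq] at hg0
      rw [← hg0] at this
      exact hirr _ this
    · exact h2
  -- key: g ((i+1) % n) = g (i+1) for i < n
  have hwrap : ∀ i < n, g ((i + 1) % n) = g (i + 1) := by
    intro i hi
    rcases Nat.lt_or_ge (i + 1) n with h1 | h1
    · rw [Nat.mod_eq_of_lt h1]
    · have : i + 1 = n := by omega
      rw [this, Nat.mod_self, hg0]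
  refine ⟨n, hn2, fun i => g i.val, ?_, ?_⟩
  · intro i j hij
    by_contra hne
    -- wlog on values
    have key : ∀ a b : ℕ, a < b → b < n → g a = g b → False := by
      intro a b hab hbn hgab
      have hm : b - a < n := by omega
      refine hmin (b - a) hm ⟨by omega, fun t => g (a + t), ?_, ?_⟩
      · simp only [Nat.add_zero]
        rw [hgab]
        congr 1
        omega
      · intro t ht
        have := hgstep (a + t) (by omega)
        simpa [Nat.add_assoc] using this
    rcases lt_trichotomy i.val j.val with h1 | h1 | h1
    · exact key i.val j.val h1 j.isLt hij
    · exact hne (Fin.ext h1)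
    · exact key j.val i.val h1 i.isLt hij.symm
  · intro i
    have := hgstep i.val i.isLt
    have he : ((finNext i : Fin n) : ℕ) = (i.val + 1) % n := rfl
    have : r (g i.val) (g ((i.val + 1) % n)) := by
      rw [hwrap i.val i.isLt]
      exact this
    exact this

end Aux

lemma TCPNet.wEdge_ne (N : TCPNet V D) (w : (X : V) → D X) {X Y : V}
    (h : N.wEdge w X Y) : X ≠ Y := by
  rcases h with (hcp | hi | ⟨W, hciYW, hsel⟩) | hcit
  · exact N.cp_ne _ _ hcp
  · exact N.iarc_ne _ _ hi
  · intro hXY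
    subst hXY
    exact (N.sel_not_endpoint _ _ hciYW).1 hsel
  · exact N.ci_ne _ _ (N.cit_ci _ _ _ hcit)

/-- if the dependency graph of `N` has no directed cycle
consisting solely of its directed edges, then `N` is conditionally acyclic
iff every semi-directed cycle of its dependency graph is conditionally
acyclic. -/
theorem stmt5 [Fintype V] [∀ X, Fintype (D X)] [∀ X, Nontrivial (D X)]
    (N : TCPNet V D)
    (hnodir : ∀ X, ¬ Relation.TransGen N.dirEdge X X) :
    N.CondAcyclic ↔
      ∀ (n : ℕ) (v : Fin n → V) (ed : Fin n → Bool),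
        IsSemiDirCycle N v ed → ¬ CondDirected N v ed := by
  classical
  constructor
  · rintro hCA n v ed ⟨hn2, hinj, hdir, hci, hexf⟩ ⟨w, hcd⟩
    have hn : 0 < n := by omega
    rcases hcd with hfwd | ⟨hall, hback⟩
    · have hedge : ∀ i, N.wEdge w (v i) (v (finNext i)) := by
        intro i
        cases hed : ed i with
        | true => exact Or.inl (hdir i hed)
        | false => exact Or.inr (hfwd i hed)
      exact hCA w _ (cycleOfFin hn v hedge)
    · have hedge : ∀ i, Function.swap (N.wEdge w) (v i) (v (finNext i)) := by
        intro i
        exact Or.inr (hback i)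
      have := cycleOfFin hn v hedge
      rw [Relation.transGen_swap] at this
      exact hCA w _ this
  · intro h w X hcyc
    have hirr : ∀ x, ¬ N.wEdge w x x := fun x hx => (N.wEdge_ne w hx) rfl
    obtain ⟨n, hn2, v, hinj, hedge⟩ := simple_cycle hirr hcyc
    by_cases hall : ∀ i, N.dirEdge (v i) (v (finNext i))
    · exact hnodir (v ⟨0, by omega⟩) (cycleOfFin (by omega) v hall)
    · push_neg at hall
      obtain ⟨i0, hi0⟩ := hall
      set ed : Fin n → Bool := fun i => if N.dirEdge (v i) (v (finNext i)) then true else false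
        with hed
      have hedt : ∀ i, ed i = true → N.dirEdge (v i) (v (finNext i)) := by
        intro i hi
        by_contra hc
        simp [hed, hc] at hi
      have hedf : ∀ i, ed i = false → N.cit (v i) (v (finNext i)) w := by
        intro i hi
        have hnd : ¬ N.dirEdge (v i) (v (finNext i)) := by
          intro hc
          simp [hed, hc] at hi
        rcases hedge i with hd | hc
        · exact absurd hd hnd
        · exact hc
      refine h n v ed ⟨hn2, hinj, hedt, ?_, ⟨i0, by simp [hed, hi0]⟩⟩
        ⟨w, Or.inl hedf⟩
      intro i hi
      exact N.cit_ci _ _ _ (hedf i hi)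
end

section
/- Let A be a semi-directed cycle in the dependency graph N* of a TCP-net N, and fix a direction d along A (equal to the direction of A if A contains directed edges). Assume that every ci-arc γ of A has at least one CIT entry orienting γ in direction d. If the selector sets of the ci-arcs of A are pairwise disjoint, then A is conditionally directed. Equivalently, under this assumption, if A is conditionally acyclic then A contains two distinct ci-arcs γi, γj with S(γi) ∩ S(γj) ≠ ∅. -/
universe u v

variable {V : Type u} {D : V → Type v}

/-- let `(v, ed)` be a semi-directed cycle, with direction `d`
the traversal direction (the direction of the cycle if it contains directed
edges).  If every ci-arc of the cycle has at least one CIT entry orienting it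
in direction `d` and the selector sets of the ci-arcs are pairwise disjoint,
then the cycle is conditionally directed. -/
theorem stmt6 [Fintype V] [∀ X, Fintype (D X)] [∀ X, Nontrivial (D X)]
    (N : TCPNet V D) {n : ℕ} (v : Fin n → V) (ed : Fin n → Bool)
    (hA : IsSemiDirCycle N v ed)
    (hentry : ∀ i, ed i = false → ∃ w : (X : V) → D X, N.cit (v i) (v (finNext i)) w)
    (hdisj : ∀ i j, i ≠ j → ed i = false → ed j = false →
      N.sel (v i) (v (finNext i)) ∩ N.sel (v j) (v (finNext j)) = ∅) :
    CondDirected N v ed := by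
  classical
  choose wi hwi using hentry
  refine ⟨fun X =>
    if h : ∃ i, ∃ hi : ed i = false, X ∈ N.sel (v i) (v (finNext i)) then
      wi h.choose h.choose_spec.choose X
    else Classical.ofNonempty, Or.inl ?_⟩
  intro i hi
  refine (N.cit_local _ _ _ (wi i hi) ?_).mpr (hwi i hi)
  intro Z hZ
  have h : ∃ j, ∃ hj : ed j = false, Z ∈ N.sel (v j) (v (finNext j)) := ⟨i, hi, hZ⟩
  have hj := h.choose_spec.choose
  have hZj := h.choose_spec.choose_spec
  have heq : h.choose = i := by
    by_contra hne
    have hd := hdisj h.choose i hne hj hi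
    exact Set.eq_empty_iff_forall_notMem.mp hd Z ⟨hZj, hZ⟩
  simp only [dif_pos h]
  simp only [heq]
end

section
/- A semi-directed cycle A in the dependency graph N* of a TCP-net N is conditionally acyclic if it contains two ci-arcs γi, γj such that either: (a) A contains directed edges, and for every assignment u to S(γi) ∩ S(γj), either no CIT entry of γi consistent with u orients γi in the direction of A, or no CIT entry of γj consistent with u orients γj in the direction of A; or (b) all edges of A are undirected, and for every assignment u to S(γi) ∩ S(γj) there is a choice of the two opposite directions along A, one for γi and the other for γj, such that no CIT entry of γi consistent with u orients γi in its chosen direction and no CIT entry of γj consistent with u orients γj in its chosen direction. -/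
universe u v

variable {V : Type u} {D : V → Type v}

/-- Some CIT entry of the ci-arc `(X,Y)` that is consistent with the
assignment `u` on the variables `S` declares `X` more important than `Y`. -/
def Orients (N : TCPNet V D) (S : Set V) (u : (X : V) → D X) (X Y : V) : Prop :=
  ∃ w : (Z : V) → D Z, (∀ Z ∈ S, w Z = u Z) ∧ N.cit X Y w

/-- a semi-directed cycle `(v, ed)` is conditionally acyclic if
it contains two ci-arcs `γi, γj` such that either (a) the cycle contains
directed edges and, for every assignment `u` to `S(γi) ∩ S(γj)`, one of
`γi, γj` has no CIT entry consistent with `u` orienting it in the direction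
of the cycle, or (b) all edges are ci-arcs and, for every assignment `u` to
`S(γi) ∩ S(γj)`, there is a choice of opposite directions for `γi` and `γj`
such that neither has a CIT entry consistent with `u` orienting it in its
chosen direction. -/
theorem stmt7 [Fintype V] [∀ X, Fintype (D X)] [∀ X, Nontrivial (D X)]
    (N : TCPNet V D) {n : ℕ} (v : Fin n → V) (ed : Fin n → Bool)
    (hA : IsSemiDirCycle N v ed)
    (h : ∃ i j : Fin n, i ≠ j ∧ ed i = false ∧ ed j = false ∧
      (((∃ k, ed k = true) ∧
        ∀ u : (X : V) → D X,
          ¬ Orients N (N.sel (v i) (v (finNext i)) ∩ N.sel (v j) (v (finNext j)))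
              u (v i) (v (finNext i)) ∨
          ¬ Orients N (N.sel (v i) (v (finNext i)) ∩ N.sel (v j) (v (finNext j)))
              u (v j) (v (finNext j))) ∨
       ((∀ k, ed k = false) ∧
        ∀ u : (X : V) → D X,
          (¬ Orients N (N.sel (v i) (v (finNext i)) ∩ N.sel (v j) (v (finNext j)))
              u (v i) (v (finNext i)) ∧
           ¬ Orients N (N.sel (v i) (v (finNext i)) ∩ N.sel (v j) (v (finNext j)))
              u (v (finNext j)) (v j)) ∨
          (¬ Orients N (N.sel (v i) (v (finNext i)) ∩ N.sel (v j) (v (finNext j)))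
              u (v (finNext i)) (v i) ∧
           ¬ Orients N (N.sel (v i) (v (finNext i)) ∩ N.sel (v j) (v (finNext j)))
              u (v j) (v (finNext j)))))) :
    ¬ CondDirected N v ed := by
  rintro ⟨w, hw⟩
  obtain ⟨i, j, hij, hi, hj, hcase⟩ := h
  have triv : ∀ (S : Set V) (X Y : V), N.cit X Y w → Orients N S w X Y :=
    fun S X Y hc => ⟨w, fun Z _ => rfl, hc⟩
  rcases hw with hfwd | ⟨hall, hrev⟩
  · have oi := triv (N.sel (v i) (v (finNext i)) ∩ N.sel (v j) (v (finNext j)))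
      _ _ (hfwd i hi)
    have oj := triv (N.sel (v i) (v (finNext i)) ∩ N.sel (v j) (v (finNext j)))
      _ _ (hfwd j hj)
    rcases hcase with ⟨_, hu⟩ | ⟨_, hu⟩
    · rcases hu w with h1 | h2
      · exact h1 oi
      · exact h2 oj
    · rcases hu w with ⟨h1, _⟩ | ⟨_, h2⟩
      · exact h1 oi
      · exact h2 oj
  · have oi := triv (N.sel (v i) (v (finNext i)) ∩ N.sel (v j) (v (finNext j)))
      _ _ (hrev i)
    have oj := triv (N.sel (v i) (v (finNext i)) ∩ N.sel (v j) (v (finNext j)))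
      _ _ (hrev j)
    rcases hcase with ⟨⟨k, hk⟩, _⟩ | ⟨_, hu⟩
    · exact absurd (hall k) (by simp [hk])
    · rcases hu w with ⟨_, h2⟩ | ⟨h1, _⟩
      · exact h2 oj
      · exact h1 oi
end

section
/- Let A be a semi-directed cycle containing at least one directed edge, in the dependency graph N* of a TCP-net N. Then A is conditionally acyclic if and only if for every assignment u to shared(A) there exists a ci-arc γ_u of A such that no CIT entry of γ_u consistent with u orients γ_u in the direction of A. -/
universe u v

variable {V : Type u} {D : V → Type v}

/-- `shared(A)`: the union of the pairwise intersections of the selector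
sets of the ci-arcs of the semi-directed cycle `(v, ed)`. -/
def sharedSet (N : TCPNet V D) {n : ℕ} (v : Fin n → V) (ed : Fin n → Bool) : Set V :=
  {Z | ∃ i j, i ≠ j ∧ ed i = false ∧ ed j = false ∧
    Z ∈ N.sel (v i) (v (finNext i)) ∧ Z ∈ N.sel (v j) (v (finNext j))}

/-- a semi-directed cycle containing at least one directed edge
is conditionally acyclic iff for every assignment `u` to `shared(A)` some
ci-arc of the cycle has no CIT entry consistent with `u` orienting it in the
direction of the cycle. -/
theorem stmt8 [Fintype V] [∀ X, Fintype (D X)] [∀ X, Nontrivial (D X)]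
    (N : TCPNet V D) {n : ℕ} (v : Fin n → V) (ed : Fin n → Bool)
    (hA : IsSemiDirCycle N v ed)
    (hdir : ∃ k, ed k = true) :
    ¬ CondDirected N v ed ↔
      ∀ u : (X : V) → D X, ∃ i, ed i = false ∧
        ¬ Orients N (sharedSet N v ed) u (v i) (v (finNext i)) := by
  classical
  obtain ⟨k, hk⟩ := hdir
  constructor
  · intro hnc u
    by_contra hcon
    push_neg at hcon
    -- hcon : ∀ i, ed i = false → Orients N (sharedSet N v ed) u (v i) (v (finNext i))
    apply hnc
    choose! W hW using hcon
    -- glue the witnesses together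
    set wf : (Z : V) → D Z := fun Z =>
      if h : ∃ i, ed i = false ∧ Z ∈ N.sel (v i) (v (finNext i)) then W h.choose Z else u Z
      with hwf
    have key : ∀ i, ed i = false → ∀ Z ∈ N.sel (v i) (v (finNext i)), W i Z = wf Z := by
      intro i hi Z hZ
      have hex : ∃ j, ed j = false ∧ Z ∈ N.sel (v j) (v (finNext j)) := ⟨i, hi, hZ⟩
      have hj := hex.choose_spec
      rw [hwf]
      simp only [dif_pos hex]
      by_cases hji : hex.choose = i
      · rw [hji]
      · have hsh : Z ∈ sharedSet N v ed := ⟨i, hex.choose, fun h => hji h.symm, hi, hj.1, hZ, hj.2⟩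
        rw [(hW i hi).1 Z hsh, (hW hex.choose hj.1).1 Z hsh]
    refine ⟨wf, Or.inl fun i hi => ?_⟩
    exact (N.cit_local _ _ (W i) wf (key i hi)).mp (hW i hi).2
  · intro hR hcd
    obtain ⟨w, hw | ⟨hall, _⟩⟩ := hcd
    · obtain ⟨i, hi, hno⟩ := hR w
      exact hno ⟨w, fun Z _ => rfl, hw i hi⟩
    · rw [hall k] at hk; exact Bool.noConfusion hk
end

section
/- Let A be a semi-directed cycle all of whose edges are ci-arcs, in the dependency graph N* of a TCP-net N, and fix one of the two directions along A as 'clockwise'. Then A is conditionally acyclic if and only if for every assignment u to shared(A) there exist ci-arcs γ1, γ2 of A (not necessarily distinct) such that no CIT entry of γ1 consistent with u orients γ1 clockwise along A and no CIT entry of γ2 consistent with u orients γ2 counter-clockwise along A. -/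
universe u v

variable {V : Type u} {D : V → Type v}

/-- Glue lemma: if each ci-arc of the all-ci cycle can be oriented in a
prescribed direction by some CIT entry consistent with `u` on `shared(A)`,
then a single assignment orients all of them simultaneously. -/
lemma glue_lemma (N : TCPNet V D) {n : ℕ} (v : Fin n → V) (ed : Fin n → Bool)
    (hund : ∀ k, ed k = false) (u : (X : V) → D X) (X Y : Fin n → V)
    (hsel : ∀ i, N.sel (X i) (Y i) = N.sel (v i) (v (finNext i)))
    (h : ∀ i, Orients N (sharedSet N v ed) u (X i) (Y i)) :
    ∃ w : (Z : V) → D Z, ∀ i, N.cit (X i) (Y i) w := by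
  classical
  choose wi hwi hcit using h
  set S := sharedSet N v ed with hS
  refine ⟨fun Z =>
    if h2 : (∃ i, Z ∈ N.sel (v i) (v (finNext i))) ∧ Z ∉ S then wi h2.1.choose Z
    else u Z, fun i => ?_⟩
  refine (N.cit_local (X i) (Y i) (wi i) _ ?_).mp (hcit i)
  intro Z hZ
  rw [hsel i] at hZ
  by_cases hsh : Z ∈ S
  · have : ¬ ((∃ i, Z ∈ N.sel (v i) (v (finNext i))) ∧ Z ∉ S) := fun hc => hc.2 hsh
    rw [dif_neg this]
    exact hwi i Z hsh
  · have hcond : (∃ i, Z ∈ N.sel (v i) (v (finNext i))) ∧ Z ∉ S := ⟨⟨i, hZ⟩, hsh⟩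
    rw [dif_pos hcond]
    have hj : Z ∈ N.sel (v hcond.1.choose) (v (finNext hcond.1.choose)) :=
      hcond.1.choose_spec
    by_cases hji : hcond.1.choose = i
    · rw [hji]
    · exact absurd ⟨hcond.1.choose, i, hji, hund _, hund _, hj, hZ⟩ hsh

/-- a semi-directed cycle all of whose edges are ci-arcs (with
the traversal direction of `v` fixed as clockwise) is conditionally acyclic
iff for every assignment `u` to `shared(A)` there are ci-arcs `γ1, γ2` of the
cycle (not necessarily distinct) such that no CIT entry of `γ1` consistent
with `u` orients `γ1` clockwise and no CIT entry of `γ2` consistent with `u`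
orients `γ2` counter-clockwise. -/
theorem stmt9 [Fintype V] [∀ X, Fintype (D X)] [∀ X, Nontrivial (D X)]
    (N : TCPNet V D) {n : ℕ} (v : Fin n → V) (ed : Fin n → Bool)
    (hA : IsSemiDirCycle N v ed)
    (hund : ∀ k, ed k = false) :
    ¬ CondDirected N v ed ↔
      ∀ u : (X : V) → D X,
        (∃ i, ¬ Orients N (sharedSet N v ed) u (v i) (v (finNext i))) ∧
        (∃ j, ¬ Orients N (sharedSet N v ed) u (v (finNext j)) (v j)) := by
  constructor
  · intro hnd u
    constructor
    · by_contra hc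
      push_neg at hc
      obtain ⟨w, hw⟩ := glue_lemma N v ed hund u (fun i => v i) (fun i => v (finNext i))
        (fun i => rfl) hc
      exact hnd ⟨w, Or.inl fun i _ => hw i⟩
    · by_contra hc
      push_neg at hc
      obtain ⟨w, hw⟩ := glue_lemma N v ed hund u (fun i => v (finNext i)) (fun i => v i)
        (fun i => N.sel_symm _ _) hc
      exact hnd ⟨w, Or.inr ⟨hund, hw⟩⟩
  · rintro h ⟨w, hw | ⟨_, hw⟩⟩
    · obtain ⟨i, hi⟩ := (h w).1
      exact hi ⟨w, fun Z _ => rfl, hw i (hund i)⟩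
    · obtain ⟨j, hj⟩ := (h w).2
      exact hj ⟨w, fun Z _ => rfl, hw j⟩
end

section
/- Let F be a 3-CNF formula with clauses C_1, …, C_n over propositional variables x_1, …, x_m, clause C_j containing literals L_{j,1}, L_{j,2}, L_{j,3}. Construct the TCP-net N with boolean variables X_1, …, X_m, C_1, …, C_n, and L_{j,k} (1 ≤ j ≤ n, 1 ≤ k ≤ 3); no cp-arcs; i-arcs (C_j, L_{j,k}) for all j, k; and ci-arcs (L_{j,k}, C_{(j mod n)+1}) for all j, k, where the selector set of the ci-arc (L_{j,k}, C_{(j mod n)+1}) is {X_i} for the propositional variable x_i occurring in literal L_{j,k}, and its CIT declares L_{j,k} more important than C_{(j mod n)+1} on the value of X_i making the literal L_{j,k} true, and less important on the value making L_{j,k} false. Then the dependency graph N* of N contains a conditionally directed semi-directed cycle if and only if F is satisfiable. -/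
universe u v

variable {V : Type u} {D : V → Type v}

/-- The variables of the TCP-net built from a 3-CNF formula with `m`
propositional variables and `n` clauses: `X i`, `C j`, and `L j k`. -/
abbrev SatV (m n : ℕ) : Type := Sum (Fin m) (Sum (Fin n) (Fin n × Fin 3))

abbrev SatV.X {m n : ℕ} (i : Fin m) : SatV m n := Sum.inl i
abbrev SatV.C {m n : ℕ} (j : Fin n) : SatV m n := Sum.inr (Sum.inl j)
abbrev SatV.L {m n : ℕ} (j : Fin n) (k : Fin 3) : SatV m n := Sum.inr (Sum.inr (j, k))

/-- for a 3-CNF formula `F` (clause `j` has literals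
`F j k = (i, b)`, meaning variable `x i` with polarity `b`), the TCP-net with
boolean variables `X i`, `C j`, `L j k`, no cp-arcs, i-arcs `(C j, L j k)`,
and ci-arcs `(L j k, C (j+1))` with selector `{X i}` whose CIT declares
`L j k` more important than `C (j+1)` exactly on the value of `X i` making
the literal true (and less important on the other value), has a conditionally
directed semi-directed cycle in its dependency graph iff `F` is
satisfiable. -/
theorem stmt10 (n m : ℕ) [NeZero n] (F : Fin n → Fin 3 → Fin m × Bool)
    (N : TCPNet (SatV m n) (fun _ => Bool))
    (hcp : ∀ x y, ¬ N.cp x y)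
    (hi : ∀ x y, N.iarc x y ↔ ∃ j k, x = SatV.C j ∧ y = SatV.L j k)
    (hci : ∀ x y, N.ci x y ↔
      (∃ j k, x = SatV.L j k ∧ y = SatV.C (j + 1)) ∨
      (∃ j k, y = SatV.L j k ∧ x = SatV.C (j + 1)))
    (hsel : ∀ j k, N.sel (SatV.L j k) (SatV.C (j + 1)) = {SatV.X (F j k).1})
    (hcit1 : ∀ j k w, N.cit (SatV.L j k) (SatV.C (j + 1)) w ↔
      w (SatV.X (F j k).1) = (F j k).2)
    (hcit2 : ∀ j k w, N.cit (SatV.C (j + 1)) (SatV.L j k) w ↔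
      w (SatV.X (F j k).1) = !(F j k).2) :
    (∃ (nc : ℕ) (v : Fin nc → SatV m n) (ed : Fin nc → Bool),
        IsSemiDirCycle N v ed ∧ CondDirected N v ed) ↔
      ∃ τ : Fin m → Bool, ∀ j : Fin n, ∃ k, τ (F j k).1 = (F j k).2 := by
  constructor
  · -- forward direction
    rintro ⟨nc, v, ed, ⟨hn2, hinj, hedT, hedF, -⟩, w, hcond⟩
    haveI : NeZero nc := ⟨by omega⟩
    have hfn : ∀ i : Fin nc, finNext i = i + 1 := by
      intro i
      apply Fin.ext
      have h1 : (1 : Fin nc).val = 1 := by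
        rw [Fin.val_one']; exact Nat.mod_eq_of_lt (by omega)
      simp [finNext, Fin.add_def, h1]
    obtain ⟨σ, σ', hσ'σ, hP⟩ :
        ∃ (σ σ' : Fin nc → Fin nc), (∀ i, σ (σ' i) = i) ∧
          ∀ i, N.dirEdge (v i) (v (σ i)) ∨ N.cit (v i) (v (σ i)) w := by
      rcases hcond with hA | ⟨hall, hB⟩
      · refine ⟨fun i => i + 1, fun i => i - 1, fun i => sub_add_cancel i 1, fun i => ?_⟩
        rcases Bool.eq_false_or_eq_true (ed i) with h | h
        · exact Or.inl (by have := hedT i h; rwa [hfn] at this)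
        · exact Or.inr (by have := hA i h; rwa [hfn] at this)
      · refine ⟨fun i => i - 1, fun i => i + 1, fun i => add_sub_cancel_right i 1,
          fun i => ?_⟩
        have := hB (i - 1)
        rw [hfn, sub_add_cancel] at this
        exact Or.inr this
    have notX : ∀ (i : Fin nc) (x : Fin m), v i ≠ SatV.X x := by
      intro i x hvx
      rcases hP (σ' i) with h | h
      · rw [hσ'σ, hvx] at h
        rcases h with h | h | ⟨W, hciW, -⟩
        · exact hcp _ _ h
        · obtain ⟨j, k, -, h2⟩ := (hi _ _).1 h
          simp [SatV.X, SatV.L] at h2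
        · rcases (hci _ _).1 hciW with ⟨j, k, h1, -⟩ | ⟨j, k, -, h1⟩ <;>
            simp [SatV.X, SatV.L, SatV.C] at h1
      · have hc := N.cit_ci _ _ _ h
        rw [hσ'σ, hvx] at hc
        rcases (hci _ _).1 hc with ⟨j, k, -, h1⟩ | ⟨j, k, h1, -⟩ <;>
          simp [SatV.X, SatV.L, SatV.C] at h1
    have lemA : ∀ (i : Fin nc) (j : Fin n) (k : Fin 3), v i = SatV.L j k →
        v (σ i) = SatV.C (j + 1) ∧ w (SatV.X (F j k).1) = (F j k).2 := by
      intro i j k hvi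
      rcases hP i with h | h
      · exfalso
        rw [hvi] at h
        rcases h with h | h | ⟨W, hciW, hmem⟩
        · exact hcp _ _ h
        · obtain ⟨j', k', h1, -⟩ := (hi _ _).1 h
          simp [SatV.C, SatV.L] at h1
        · rcases (hci _ _).1 hciW with ⟨a, b, h1, h2⟩ | ⟨a, b, h1, h2⟩
          · rw [h1, h2, hsel] at hmem
            simp [SatV.L, SatV.X] at hmem
          · rw [h2, h1, N.sel_symm, hsel] at hmem
            simp [SatV.L, SatV.X] at hmem
      · have hc := N.cit_ci _ _ _ h
        rw [hvi] at h hc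
        rcases (hci _ _).1 hc with ⟨a, b, h1, h2⟩ | ⟨a, b, h1, h2⟩
        · simp only [SatV.L, Sum.inr.injEq, Prod.mk.injEq] at h1
          obtain ⟨rfl, rfl⟩ := h1
          rw [h2] at h
          exact ⟨h2, (hcit1 _ _ w).1 h⟩
        · simp [SatV.L, SatV.C] at h2
    have lemB : ∀ (i : Fin nc) (j : Fin n), v i = SatV.C j →
        ∃ k, v (σ i) = SatV.L j k := by
      intro i j hvi
      rcases hP i with h | h
      · rw [hvi] at h
        rcases h with h | h | ⟨W, hciW, hmem⟩
        · exact absurd h (hcp _ _)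
        · obtain ⟨j', k', h1, h2⟩ := (hi _ _).1 h
          simp only [SatV.C, Sum.inr.injEq, Sum.inl.injEq] at h1
          subst h1
          exact ⟨k', h2⟩
        · exfalso
          rcases (hci _ _).1 hciW with ⟨a, b, h1, h2⟩ | ⟨a, b, h1, h2⟩
          · rw [h1, h2, hsel] at hmem
            simp [SatV.C, SatV.X] at hmem
          · rw [h2, h1, N.sel_symm, hsel] at hmem
            simp [SatV.C, SatV.X] at hmem
      · exfalso
        have hc := N.cit_ci _ _ _ h
        rw [hvi] at h hc
        rcases (hci _ _).1 hc with ⟨a, b, h1, h2⟩ | ⟨a, b, h1, h2⟩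
        · simp [SatV.C, SatV.L] at h1
        · have hA := (lemA (σ i) a b h1).2
          rw [h2, h1] at h
          have := (hcit2 a b w).1 h
          rw [hA] at this
          simp at this
    have step : ∀ j : Fin n, (∃ i, v i = SatV.C j) →
        (∃ k, w (SatV.X (F j k).1) = (F j k).2) ∧ ∃ i, v i = SatV.C (j + 1) := by
      rintro j ⟨i, hvi⟩
      obtain ⟨k, hk⟩ := lemB i j hvi
      obtain ⟨h1, h2⟩ := lemA (σ i) j k hk
      exact ⟨⟨k, h2⟩, σ (σ i), h1⟩
    have hex : ∃ j i, v i = SatV.C j := by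
      obtain ⟨i0⟩ : Nonempty (Fin nc) := ⟨⟨0, by omega⟩⟩
      rcases hv : v i0 with x | (j | ⟨j, k⟩)
      · exact absurd hv (notX i0 x)
      · exact ⟨j, i0, hv⟩
      · exact ⟨j + 1, σ i0, (lemA i0 j k hv).1⟩
    obtain ⟨j0, hj0⟩ := hex
    open Fin.NatCast in
    have hall : ∀ t : ℕ, ∃ i, v i = SatV.C (j0 + (t : Fin n)) := by
      intro t
      induction t with
      | zero => simpa using hj0
      | succ t ih =>
        have h2 := (step _ ih).2
        have hc : ((t + 1 : ℕ) : Fin n) = (t : Fin n) + 1 := by push_cast; ring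
        rw [hc, ← add_assoc]
        exact h2
    refine ⟨fun x => w (SatV.X x), fun j => ?_⟩
    obtain ⟨i, hvi⟩ : ∃ i, v i = SatV.C j := by
      open Fin.NatCast in
      have := hall (j - j0).val
      rwa [Fin.cast_val_eq_self, add_comm, sub_add_cancel] at this
    obtain ⟨k, hk⟩ := (step j ⟨i, hvi⟩).1
    exact ⟨k, hk⟩
  · -- backward direction
    rintro ⟨τ, hτ⟩
    choose kf hkf using hτ
    have hn : 0 < n := Nat.pos_of_ne_zero (NeZero.ne n)
    set v : Fin (2 * n) → SatV m n := fun i =>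
      if i.val % 2 = 0 then SatV.C ⟨i.val / 2, by have := i.2; omega⟩
      else SatV.L ⟨i.val / 2, by have := i.2; omega⟩ (kf ⟨i.val / 2, by have := i.2; omega⟩)
      with hvdef
    have hvC : ∀ (i : Fin (2 * n)) (h : i.val % 2 = 0),
        v i = SatV.C ⟨i.val / 2, by have := i.2; omega⟩ := by
      intro i h; simp [hvdef, h]
    have hvL : ∀ (i : Fin (2 * n)) (h : i.val % 2 = 1),
        v i = SatV.L ⟨i.val / 2, by have := i.2; omega⟩ (kf ⟨i.val / 2, by have := i.2; omega⟩) := by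
      intro i h; simp [hvdef, h]
    have hvalone : ∀ j : Fin n, (j + 1).val = (j.val + 1) % n := by
      intro j
      have h1 : ((j + 1 : Fin n)).val = (j.val + (1 : Fin n).val) % n := by
        rw [Fin.add_def]
      rw [h1, Fin.val_one', Nat.add_mod j.val 1 n, Nat.mod_eq_of_lt j.isLt]
    have hnextval : ∀ i : Fin (2 * n), (finNext i).val = (i.val + 1) % (2 * n) := by
      intro i; rfl
    have hnextC : ∀ (i : Fin (2 * n)) (h : i.val % 2 = 1),
        v (finNext i) = SatV.C (⟨i.val / 2, by have := i.2; omega⟩ + 1) := by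
      intro i h
      have hi2 := i.2
      have h1 : (finNext i).val % 2 = 0 := by
        rw [hnextval]
        rcases Nat.lt_or_ge (i.val + 1) (2 * n) with hlt | hge
        · rw [Nat.mod_eq_of_lt hlt]; omega
        · have : i.val + 1 = 2 * n := by omega
          rw [this, Nat.mod_self]
      rw [hvC _ h1]
      congr 1
      apply Fin.ext
      simp only [hvalone]
      rw [hnextval]
      rcases Nat.lt_or_ge (i.val + 1) (2 * n) with hlt | hge
      · rw [Nat.mod_eq_of_lt hlt]
        have : i.val / 2 + 1 < n := by omega
        rw [Nat.mod_eq_of_lt this]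
        omega
      · have he : i.val + 1 = 2 * n := by omega
        rw [he, Nat.mod_self]
        have : i.val / 2 + 1 = n := by omega
        rw [this, Nat.mod_self]
    have hnextL : ∀ (i : Fin (2 * n)) (h : i.val % 2 = 0),
        v (finNext i) = SatV.L ⟨i.val / 2, by have := i.2; omega⟩
          (kf ⟨i.val / 2, by have := i.2; omega⟩) := by
      intro i h
      have hi2 := i.2
      have hlt : i.val + 1 < 2 * n := by omega
      have h1 : (finNext i).val = i.val + 1 := by rw [hnextval, Nat.mod_eq_of_lt hlt]
      have h2 : (finNext i).val % 2 = 1 := by omega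
      rw [hvL _ h2]
      have h3 : (finNext i).val / 2 = i.val / 2 := by omega
      congr 2 <;> apply Fin.ext <;> simp [h3]
    refine ⟨2 * n, v, fun i => decide (i.val % 2 = 0), ⟨by omega, ?_, ?_, ?_, ?_⟩, ?_⟩
    · -- injective
      intro i1 i2 h
      apply Fin.ext
      by_cases h1 : i1.val % 2 = 0 <;> by_cases h2 : i2.val % 2 = 0
      · rw [hvC _ h1, hvC _ h2] at h
        simp only [SatV.C, Sum.inr.injEq, Sum.inl.injEq, Fin.mk.injEq] at h
        omega
      · rw [hvC _ h1, hvL _ (by omega)] at h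
        simp [SatV.C, SatV.L] at h
      · rw [hvL _ (by omega), hvC _ h2] at h
        simp [SatV.C, SatV.L] at h
      · rw [hvL _ (by omega), hvL _ (by omega)] at h
        simp only [SatV.L, Sum.inr.injEq, Prod.mk.injEq, Fin.mk.injEq] at h
        obtain ⟨h, -⟩ := h
        omega
    · -- directed edges
      intro i hed
      have h0 : i.val % 2 = 0 := by simpa using hed
      rw [hvC _ h0, hnextL _ h0]
      exact Or.inr (Or.inl ((hi _ _).2 ⟨_, _, rfl, rfl⟩))
    · -- ci edges
      intro i hed
      have h0 : i.val % 2 = 1 := by simp at hed; omega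
      rw [hvL _ h0, hnextC _ h0]
      exact (hci _ _).2 (Or.inl ⟨_, _, rfl, rfl⟩)
    · -- exists false edge
      refine ⟨⟨1, by omega⟩, by simp⟩
    · -- conditionally directed
      refine ⟨fun s => match s with | Sum.inl x => τ x | _ => true, Or.inl ?_⟩
      intro i hed
      have h0 : i.val % 2 = 1 := by simp at hed; omega
      rw [hvL _ h0, hnextC _ h0]
      rw [hcit1]
      exact hkf _
end

section
/- Let F be a 3-CNF formula with clauses C_1, …, C_n over propositional variables x_1, …, x_m. Construct the TCP-net N with boolean variables X_1, …, X_m, C_1, …, C_n, and one dummy variable C; no cp-arcs; one i-arc (C, C_1); and ci-arcs E_j = (C_j, C_{j+1}) for 1 ≤ j ≤ n−1 and E_n = (C_n, C), where the selector set of E_j is the set of variables X_i whose propositional variable occurs in clause C_j, and CIT(E_j) declares C_j more important than the other endpoint of E_j exactly on those selector assignments that make clause C_j true, and less important on those that make C_j false. Then the semi-directed cycle consisting of the i-arc (C, C_1) and the ci-arcs E_1, …, E_n (the unique semi-directed cycle in the dependency graph N*) is conditionally directed if and only if F is satisfiable. -/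
universe u v

variable {V : Type u} {D : V → Type v}

/-- The variables of the TCP-net built from a 3-CNF formula with `m`
propositional variables and `n` clauses: `X i`, `C j`, and a dummy `C`. -/
abbrev Var11 (m n : ℕ) : Type := Sum (Fin m) (Sum (Fin n) Unit)

abbrev Var11.X {m n : ℕ} (i : Fin m) : Var11 m n := Sum.inl i
abbrev Var11.C {m n : ℕ} (j : Fin n) : Var11 m n := Sum.inr (Sum.inl j)
abbrev Var11.dummy {m n : ℕ} : Var11 m n := Sum.inr (Sum.inr ())

/-- The other endpoint of the ci-arc `E j`: the clause variable `C (j+1)`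
for `j < n - 1`, and the dummy variable `C` for `j = n - 1`. -/
def Var11.next {m n : ℕ} (j : Fin n) : Var11 m n :=
  if h : j.val + 1 < n then Var11.C ⟨j.val + 1, h⟩ else Var11.dummy

/-- The vertex sequence of the semi-directed cycle `C, C 0, C 1, …, C (n-1)`. -/
def cyc11V (m n : ℕ) : Fin (n + 1) → Var11 m n :=
  fun i => if h : 0 < i.val then Var11.C ⟨i.val - 1, by omega⟩ else Var11.dummy

/-- The edge labels of that cycle: only the edge from the dummy `C` to `C 0`
(the i-arc) is directed. -/
def cyc11Ed (n : ℕ) : Fin (n + 1) → Bool := fun i => decide (i.val = 0)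

/-- for a 3-CNF formula `F`, the TCP-net with boolean variables
`X i`, `C j` and a dummy `C`, no cp-arcs, the single i-arc `(C, C 0)`, and
ci-arcs `E j` between `C j` and its successor (`C (j+1)`, resp. the dummy `C`
for the last clause) whose selector set consists of the variables of clause
`j` and whose CIT declares `C j` more important exactly on the selector
assignments making clause `j` true, has the property that the semi-directed
cycle consisting of the i-arc and `E 0, …, E (n-1)` is conditionally directed
iff `F` is satisfiable. -/
theorem stmt11 (n m : ℕ) [NeZero n] (F : Fin n → Fin 3 → Fin m × Bool)
    (N : TCPNet (Var11 m n) (fun _ => Bool))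
    (hcp : ∀ x y, ¬ N.cp x y)
    (hi : ∀ x y, N.iarc x y ↔ x = Var11.dummy ∧ y = Var11.C (0 : Fin n))
    (hci : ∀ x y, N.ci x y ↔ ∃ j : Fin n,
      (x = Var11.C j ∧ y = Var11.next j) ∨ (y = Var11.C j ∧ x = Var11.next j))
    (hsel : ∀ j : Fin n, N.sel (Var11.C j) (Var11.next j) =
      {z | ∃ k, z = Var11.X (F j k).1})
    (hcit1 : ∀ (j : Fin n) w, N.cit (Var11.C j) (Var11.next j) w ↔
      ∃ k, w (Var11.X (F j k).1) = (F j k).2)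
    (hcit2 : ∀ (j : Fin n) w, N.cit (Var11.next j) (Var11.C j) w ↔
      ¬ ∃ k, w (Var11.X (F j k).1) = (F j k).2) :
    IsSemiDirCycle N (cyc11V m n) (cyc11Ed n) ∧
      (CondDirected N (cyc11V m n) (cyc11Ed n) ↔
        ∃ τ : Fin m → Bool, ∀ j : Fin n, ∃ k, τ (F j k).1 = (F j k).2) := by

  have hn : 0 < n := Nat.pos_of_ne_zero (NeZero.ne n)
  have hnext : ∀ i : Fin (n+1), (hpos : 0 < i.val) →
      cyc11V m n (finNext i) = Var11.next (⟨i.val - 1, by omega⟩ : Fin n) := by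
    intro i hpos
    have hle : i.val ≤ n := by omega
    unfold cyc11V finNext Var11.next
    rcases Nat.lt_or_ge i.val n with hlt | hge
    · have hmod : (i.val + 1) % (n+1) = i.val + 1 := Nat.mod_eq_of_lt (by omega)
      simp only [hmod]
      rw [dif_pos (by omega), dif_pos (by omega)]
      simp only [Var11.C, Sum.inr.injEq, Sum.inl.injEq, Fin.mk.injEq]
      omega
    · have hin : i.val = n := by omega
      have hmod : (i.val + 1) % (n+1) = 0 := by rw [hin]; simp
      simp only [hmod]
      rw [dif_neg (by omega), dif_neg (by omega)]
  have hvpos : ∀ i : Fin (n+1), (hpos : 0 < i.val) →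
      cyc11V m n i = Var11.C (⟨i.val - 1, by omega⟩ : Fin n) := by
    intro i hpos
    unfold cyc11V
    rw [dif_pos hpos]
  have hvz : ∀ i : Fin (n+1), ¬ 0 < i.val → cyc11V m n i = Var11.dummy := by
    intro i h
    unfold cyc11V
    rw [dif_neg h]
  have hinj : Function.Injective (cyc11V m n) := by
    intro i j h
    by_cases hi0 : 0 < i.val <;> by_cases hj0 : 0 < j.val
    · rw [hvpos _ hi0, hvpos _ hj0] at h
      simp only [Var11.C, Sum.inr.injEq, Sum.inl.injEq, Fin.mk.injEq] at h
      exact Fin.ext (by omega)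
    · rw [hvpos _ hi0, hvz _ hj0] at h
      exact absurd h (by simp [Var11.C, Var11.dummy])
    · rw [hvz _ hi0, hvpos _ hj0] at h
      exact absurd h (by simp [Var11.C, Var11.dummy])
    · exact Fin.ext (by omega)
  constructor
  · refine ⟨by omega, hinj, ?_, ?_, ⟨⟨1, by omega⟩, by simp [cyc11Ed]⟩⟩
    · intro i hed
      have hi0 : i.val = 0 := by simpa [cyc11Ed] using hed
      have hv : cyc11V m n i = Var11.dummy := by
        unfold cyc11V; rw [dif_neg (by omega)]
      have hfn : (finNext i).val = 1 := by
        simp [finNext, hi0, Nat.mod_eq_of_lt (by omega : 1 < n + 1)]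
      have hv2 : cyc11V m n (finNext i) = Var11.C (0 : Fin n) := by
        have h1 : 0 < (finNext i).val := by omega
        rw [hvpos _ h1]
        congr 1
        ext
        simp [hfn]
      rw [hv, hv2]
      exact Or.inr (Or.inl ((hi _ _).mpr ⟨rfl, rfl⟩))
    · intro i hed
      have hi0 : 0 < i.val := by
        by_contra h
        simp [cyc11Ed, Nat.eq_zero_of_not_pos h] at hed
      rw [hvpos _ hi0, hnext _ hi0]
      exact (hci _ _).mpr ⟨_, Or.inl ⟨rfl, rfl⟩⟩
  · constructor
    · rintro ⟨w, hw | ⟨hall, -⟩⟩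
      · refine ⟨fun i => w (Var11.X i), fun j => ?_⟩
        set i : Fin (n+1) := ⟨j.val + 1, by omega⟩ with hidef
        have hed : cyc11Ed n i = false := by simp [cyc11Ed, hidef]
        have hcit := hw i hed
        rw [hvpos _ (by simp [hidef]), hnext _ (by simp [hidef])] at hcit
        have hj : (⟨i.val - 1, by omega⟩ : Fin n) = j := Fin.ext (by simp [hidef])
        rw [hj] at hcit
        exact (hcit1 j w).mp hcit
      · have := hall ⟨0, by omega⟩
        simp [cyc11Ed] at this
    · rintro ⟨τ, hτ⟩
      refine ⟨Sum.elim τ (fun _ => false), Or.inl fun i hed => ?_⟩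
      have hi0 : 0 < i.val := by
        by_contra h
        simp [cyc11Ed, Nat.eq_zero_of_not_pos h] at hed
      rw [hvpos _ hi0, hnext _ hi0]
      exact (hcit1 _ _).mpr (hτ _)
end

section
/- Let N be a conditionally acyclic TCP-net in which every CPT order ≻^X_p is a strict total order on D(X), and let x be an assignment to a (possibly empty) subset X' ⊆ V. Let o* be the completion of x obtained by the forward sweep procedure: process the variables in a topological order of the cp-arcs (which exists, since conditional acyclicity implies the cp-arc graph is acyclic) and assign each variable X ∉ X' the ≻^X_p-greatest value of D(X), where p is the already-determined assignment to Pa(X). Then o* is the most preferred outcome in Comp(x): for every completion o of x with o ≠ o*, N ⊨ o* ≻ o. -/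
universe u v

variable {V : Type u} {D : V → Type v}

/-- forward sweep optimality.  Let `N` be conditionally acyclic
with all CPT orders strict total orders, let `x` be an assignment to a subset
`X'` of the variables, and let `o*` be the outcome produced by the forward
sweep procedure, i.e., the completion of `x` in which every variable outside
`X'` takes the value that is most preferred given the values of its parents.
Then `o*` is the most preferred completion of `x`: `N ⊨ o* ≻ o` for every
other completion `o` of `x`. -/
theorem stmt13 [Fintype V] [∀ X, Fintype (D X)] [∀ X, Nontrivial (D X)]
    (N : TCPNet V D) (hN : N.CondAcyclic)
    (htotal : ∀ (X : V) (o : (Y : V) → D Y) (a b : D X), a ≠ b →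
      N.cpt X o a b ∨ N.cpt X o b a)
    (X' : Set V) (x : (X : V) → D X)
    (ostar : (X : V) → D X)
    (hext : ∀ X ∈ X', ostar X = x X)
    (hmax : ∀ X ∉ X', ∀ y : D X, y ≠ ostar X → N.cpt X ostar (ostar X) y) :
    ∀ o : (X : V) → D X, (∀ X ∈ X', o X = x X) → o ≠ ostar →
      N.Entails ostar o := by
  classical
  have hirr : ∀ X : V, ¬ Relation.TransGen N.cp X X := by
    intro X h
    exact hN ostar X (Relation.TransGen.mono (r := N.cp) (p := N.wEdge ostar) (fun a b hab => Or.inl (Or.inl hab)) X X h)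
  have hwf : WellFounded (Relation.TransGen N.cp) := by
    haveI : IsTrans V (Relation.TransGen N.cp) := ⟨fun a b c => Relation.TransGen.trans⟩
    haveI : IsIrrefl V (Relation.TransGen N.cp) := ⟨hirr⟩
    exact Finite.wellFounded_of_trans_of_irrefl _
  suffices h : ∀ (n : ℕ) (o : (X : V) → D X), (∀ X ∈ X', o X = x X) →
      (Finset.univ.filter (fun X => o X ≠ ostar X)).card ≤ n → o ≠ ostar →
      N.Entails ostar o by
    intro o ho hne
    exact h _ o ho le_rfl hne
  intro n
  induction n with
  | zero =>
    intro o ho hcard hne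
    exfalso; apply hne; funext Y
    by_contra hY
    have hmem : Y ∈ Finset.univ.filter (fun X => o X ≠ ostar X) := by
      simp [hY]
    rw [Finset.card_eq_zero.mp (Nat.le_zero.mp hcard)] at hmem
    simp at hmem
  | succ n ih =>
    intro o ho hcard hne
    have hSne : {X : V | o X ≠ ostar X}.Nonempty := by
      by_contra hempty
      apply hne; funext Y
      by_contra hY
      exact hempty ⟨Y, hY⟩
    obtain ⟨X, hXS, hmin⟩ := hwf.has_min _ hSne
    have hXne : o X ≠ ostar X := hXS
    have hXnotin : X ∉ X' := by
      intro hmem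
      exact hXne ((ho X hmem).trans (hext X hmem).symm)
    have hpamin : ∀ Y, N.cp Y X → o Y = ostar Y := by
      intro Y hYX
      by_contra hY
      exact hmin Y hY (Relation.TransGen.single hYX)
    set o' : (X : V) → D X := Function.update o X (ostar X) with ho'def
    have ho'X : o' X = ostar X := Function.update_self _ _ _
    have ho'ne : ∀ Y, Y ≠ X → o' Y = o Y := fun Y hY => Function.update_of_ne hY _ _
    have hcpt : N.cpt X o' (ostar X) (o X) := by
      have h1 : N.cpt X ostar (ostar X) (o X) := hmax X hXnotin (o X) (fun h => hXne h)
      have h2 : ∀ Y, N.cp Y X → ostar Y = o' Y := by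
        intro Y hYX
        have hYneX : Y ≠ X := N.cp_ne Y X hYX
        rw [ho'ne Y hYneX, hpamin Y hYX]
      exact (N.cpt_local X ostar o' h2 _ _).mp h1
    intro pref hpref hsat
    obtain ⟨hc1, _, _⟩ := hsat
    have hstep : pref o' o := by
      apply hc1 X o' o ho'ne
      rw [ho'X]; exact hcpt
    by_cases h' : o' = ostar
    · rw [← h']; exact hstep
    · have ho'ext : ∀ Y ∈ X', o' Y = x Y := by
        intro Y hY
        have hYX : Y ≠ X := by rintro rfl; exact hXnotin hY
        rw [ho'ne Y hYX]; exact ho Y hY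
      have hsub : (Finset.univ.filter (fun Z => o' Z ≠ ostar Z)) ⊆
          (Finset.univ.filter (fun Z => o Z ≠ ostar Z)).erase X := by
        intro Z hZ
        simp only [Finset.mem_filter, Finset.mem_univ, true_and] at hZ
        have hZX : Z ≠ X := by rintro rfl; exact hZ ho'X
        rw [Finset.mem_erase]
        refine ⟨hZX, ?_⟩
        simp only [Finset.mem_filter, Finset.mem_univ, true_and]
        rw [← ho'ne Z hZX]; exact hZ
      have hcard' : (Finset.univ.filter (fun Z => o' Z ≠ ostar Z)).card ≤ n := by
        have hXmem : X ∈ (Finset.univ.filter (fun Z => o Z ≠ ostar Z)) := by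
          simp [hXne]
        calc (Finset.univ.filter (fun Z => o' Z ≠ ostar Z)).card
            ≤ ((Finset.univ.filter (fun Z => o Z ≠ ostar Z)).erase X).card :=
              Finset.card_le_card hsub
          _ = (Finset.univ.filter (fun Z => o Z ≠ ostar Z)).card - 1 :=
              Finset.card_erase_of_mem hXmem
          _ ≤ n := by omega
      have hihres := ih o' ho'ext hcard' h' pref hpref ⟨hc1, ‹_›, ‹_›⟩
      exact hpref.2 _ _ _ hihres hstep
end

section
/- Let N be a satisfiable TCP-net in which every CPT order ≻^X_p is a strict total order on D(X), and let o and o' be outcomes. Then N ⊨ o ≻ o' if and only if there is an improving flipping sequence with respect to N from o' to o. -/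
universe u v

variable {V : Type u} {D : V → Type v}

/-- A single improving flip from `o` to `o'` sanctioned by `N`: either a
CP-flip (exactly one variable improves, given its parents' common values) or
an I-flip (one variable improves, another worsens, and the former is more
important than the latter via an i-arc or a ci-arc whose CIT declares it so
on the common values of the selector set). -/
def ImpFlip (N : TCPNet V D) (o o' : (X : V) → D X) : Prop :=
  (∃ X, (∀ Y, Y ≠ X → o Y = o' Y) ∧ o X ≠ o' X ∧ N.cpt X o (o' X) (o X)) ∨
  (∃ X Y, X ≠ Y ∧ o X ≠ o' X ∧ o Y ≠ o' Y ∧ (∀ Z, Z ≠ X → Z ≠ Y → o Z = o' Z) ∧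
    N.cpt X o (o' X) (o X) ∧ N.cpt Y o (o Y) (o' Y) ∧ (N.iarc X Y ∨ N.cit X Y o))

/-- Every satisfying preference order contains every (reversed) improving flip. -/
lemma flip_pref (N : TCPNet V D) {pref : ((X : V) → D X) → ((X : V) → D X) → Prop}
    (hs : N.Satisfies pref) {a b : (X : V) → D X} (h : ImpFlip N a b) : pref b a := by
  obtain ⟨h1, h2, h3⟩ := hs
  rcases h with ⟨X, hoff, hne, hc⟩ | ⟨X, Y, hXY, hxa, hya, hoff, hcx, hcy, himp⟩
  · exact h1 X b a (fun Z hZ => (hoff Z hZ).symm)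
      ((N.cpt_local X a b (fun Z hZ => hoff Z (N.cp_ne Z X hZ)) _ _).mp hc)
  · have hnpYX : ¬ N.cp Y X := by
      rcases himp with hi | hc'
      · exact (N.iarc_indep X Y hi).2
      · exact (N.ci_indep X Y (N.cit_ci X Y a hc')).2
    have hcx' : N.cpt X b (b X) (a X) :=
      (N.cpt_local X a b (fun Z hZ => hoff Z (N.cp_ne Z X hZ)
        (fun e => hnpYX (e ▸ hZ))) _ _).mp hcx
    rcases himp with hi | hc'
    · exact h2 X Y b a hi (fun Z z1 z2 => (hoff Z z1 z2).symm) hcx'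
    · have hci := N.cit_ci X Y a hc'
      have hse := N.sel_not_endpoint X Y hci
      have hc'' : N.cit X Y b := (N.cit_local X Y a b
        (fun Z hZ => hoff Z (fun e => hse.1 (e ▸ hZ)) (fun e => hse.2 (e ▸ hZ)))).mp hc'
      exact h3 X Y b a hc'' (fun Z z1 z2 => (hoff Z z1 z2).symm) hcx'

/-- Every satisfying preference order contains the (reversed) transitive
closure of improving flips. -/
lemma pref_of_transGen (N : TCPNet V D)
    {pref : ((X : V) → D X) → ((X : V) → D X) → Prop}
    (hpo : IsPrefOrder pref) (hs : N.Satisfies pref) {a b : (X : V) → D X}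
    (h : Relation.TransGen (ImpFlip N) b a) : pref a b := by
  induction h with
  | single h => exact flip_pref N hs h
  | tail _ h2 ih => exact hpo.2 _ _ _ (flip_pref N hs h2) ih

/-- Key step for satisfaction of the i-arc and ci-arc conditions by the
transitive closure of improving flips. -/
lemma two_var_flips (N : TCPNet V D)
    (htotal : ∀ (X : V) (o : (Y : V) → D Y) (a b : D X), a ≠ b →
      N.cpt X o a b ∨ N.cpt X o b a)
    {X Y : V} {o o' : (Z : V) → D Z}
    (hXY : X ≠ Y) (hnp : ¬ N.cp Y X)
    (himp : N.iarc X Y ∨ N.cit X Y o')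
    (hoff : ∀ Z, Z ≠ X → Z ≠ Y → o Z = o' Z)
    (hcpt : N.cpt X o (o X) (o' X)) :
    Relation.TransGen (ImpFlip N) o' o := by
  classical
  have hx : o X ≠ o' X := by
    intro h
    exact N.cpt_irrefl X o (o' X) (h ▸ hcpt)
  have hcpt' : N.cpt X o' (o X) (o' X) :=
    (N.cpt_local X o o' (fun Z hZ => hoff Z (N.cp_ne Z X hZ)
      (fun e => hnp (e ▸ hZ))) _ _).mp hcpt
  by_cases hY : o Y = o' Y
  · refine Relation.TransGen.single (Or.inl ⟨X, ?_, Ne.symm hx, hcpt'⟩)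
    intro Z hZ
    by_cases hZY : Z = Y
    · subst hZY; exact hY.symm
    · exact (hoff Z hZ hZY).symm
  · rcases htotal Y o' (o Y) (o' Y) hY with hY2 | hY2
    · -- two flips: first CP-flip at Y, then CP-flip at X
      set o'' : (Z : V) → D Z := Function.update o' Y (o Y) with ho''
      have hYY : o'' Y = o Y := Function.update_self _ _ _
      have hne' : ∀ Z, Z ≠ Y → o'' Z = o' Z := fun Z hZ =>
        Function.update_of_ne hZ _ _
      have flip1 : ImpFlip N o' o'' := by
        refine Or.inl ⟨Y, fun Z hZ => (hne' Z hZ).symm, ?_, ?_⟩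
        · rw [hYY]; exact fun e => hY e.symm
        · rw [hYY]; exact hY2
      have flip2 : ImpFlip N o'' o := by
        refine Or.inl ⟨X, ?_, ?_, ?_⟩
        · intro Z hZ
          by_cases hZY : Z = Y
          · subst hZY; exact hYY
          · rw [hne' Z hZY]; exact (hoff Z hZ hZY).symm
        · rw [hne' X hXY]; exact Ne.symm hx
        · rw [hne' X hXY]
          refine (N.cpt_local X o o'' (fun Z hZ => ?_) _ _).mp hcpt
          by_cases hZY : Z = Y
          · subst hZY; exact hYY.symm
          · exact (hoff Z (N.cp_ne Z X hZ) hZY).trans (hne' Z hZY).symm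
      exact (Relation.TransGen.single flip1).tail flip2
    · -- single I-flip
      exact Relation.TransGen.single (Or.inr ⟨X, Y, hXY, Ne.symm hx, Ne.symm hY,
        fun Z z1 z2 => (hoff Z z1 z2).symm, hcpt', hY2, himp⟩)

/-- for a satisfiable TCP-net with strictly totally ordered
CPTs, `N ⊨ o ≻ o'` iff there is an improving flipping sequence from `o'` to
`o`. -/
theorem stmt14 [Fintype V] [∀ X, Fintype (D X)] [∀ X, Nontrivial (D X)]
    (N : TCPNet V D) (hsat : N.Satisfiable)
    (htotal : ∀ (X : V) (o : (Y : V) → D Y) (a b : D X), a ≠ b →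
      N.cpt X o a b ∨ N.cpt X o b a)
    (o o' : (X : V) → D X) :
    N.Entails o o' ↔ Relation.TransGen (ImpFlip N) o' o := by
  constructor
  · intro h
    obtain ⟨p, hpo, hs⟩ := hsat
    refine h (fun a b => Relation.TransGen (ImpFlip N) b a) ⟨?_, ?_⟩ ⟨?_, ?_, ?_⟩
    · -- irreflexivity
      intro a ha
      exact hpo.1 a (pref_of_transGen N hpo hs ha)
    · -- transitivity
      exact fun a b c hab hbc => hbc.trans hab
    · -- CPTs
      intro X a b hoff hc
      have hx : a X ≠ b X := fun e => N.cpt_irrefl X a (b X) (e ▸ hc)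
      refine Relation.TransGen.single (Or.inl ⟨X, fun Z hZ => (hoff Z hZ).symm,
        Ne.symm hx, ?_⟩)
      exact (N.cpt_local X a b (fun Z hZ => hoff Z (N.cp_ne Z X hZ)) _ _).mp hc
    · -- i-arcs
      intro X Y a b hi hoff hc
      exact two_var_flips N htotal (N.iarc_ne X Y hi) (N.iarc_indep X Y hi).2
        (Or.inl hi) hoff hc
    · -- ci-arcs
      intro X Y a b hcit hoff hc
      have hci := N.cit_ci X Y a hcit
      have hse := N.sel_not_endpoint X Y hci
      have hcit' : N.cit X Y b := (N.cit_local X Y a b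
        (fun Z hZ => hoff Z (fun e => hse.1 (e ▸ hZ)) (fun e => hse.2 (e ▸ hZ)))).mp hcit
      exact two_var_flips N htotal (N.ci_ne X Y hci) (N.ci_indep X Y hci).2
        (Or.inr hcit') hoff hc
  · intro h pref hpo hs
    exact pref_of_transGen N hpo hs h
end

section
/- Let N be a TCP-net in which every CPT order ≻^X_p is a strict total order on D(X), and let G be the directed graph on D(V) with an edge from o1 to o2 exactly when there is an improving flipping sequence of length one (a single CP-flip or I-flip) from o1 to o2. Then every strict partial order ≻ on D(V) that respects the paths in G (i.e., o2 ≻ o1 whenever there is a nonempty directed path from o1 to o2 in G) satisfies N. -/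
universe u v

variable {V : Type u} {D : V → Type v}

/-- for a TCP-net with strictly totally ordered CPTs, every
strict partial order on outcomes that respects the paths of the improving
flip graph (preferring the endpoint of any nonempty directed path of flips to
its starting point) satisfies `N`. -/
theorem stmt15 [Fintype V] [∀ X, Fintype (D X)] [∀ X, Nontrivial (D X)]
    (N : TCPNet V D)
    (htotal : ∀ (X : V) (o : (Y : V) → D Y) (a b : D X), a ≠ b →
      N.cpt X o a b ∨ N.cpt X o b a)
    (pref : ((X : V) → D X) → ((X : V) → D X) → Prop)
    (hpref : IsPrefOrder pref)
    (hresp : ∀ o₁ o₂, Relation.TransGen (ImpFlip N) o₁ o₂ → pref o₂ o₁) :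
    N.Satisfies pref := by
  classical
  -- single CP-flip case
  have flip1 : ∀ (X : V) (o o' : (Y : V) → D Y),
      (∀ Y, Y ≠ X → o Y = o' Y) → N.cpt X o (o X) (o' X) → pref o o' := by
    intro X o o' hag hc
    have hne : o X ≠ o' X := by
      intro h; exact N.cpt_irrefl X o (o X) (by rw [← h] at hc; exact hc)
    have hloc : N.cpt X o' (o X) (o' X) :=
      (N.cpt_local X o o' (fun Y hY => hag Y (N.cp_ne Y X hY)) (o X) (o' X)).mp hc
    exact hresp o' o (Relation.TransGen.single
      (Or.inl ⟨X, fun Y hY => (hag Y hY).symm, fun h => hne h.symm, hloc⟩))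
  have flip2 : ∀ (X Y : V) (o o' : (Z : V) → D Z), X ≠ Y →
      ¬ N.cp X Y → ¬ N.cp Y X →
      (N.iarc X Y ∨ N.cit X Y o') →
      (∀ Z, Z ≠ X → Z ≠ Y → o Z = o' Z) → N.cpt X o (o X) (o' X) → pref o o' := by
    intro X Y o o' hXY hcpXY hcpYX himp hag hc
    have hneX : o X ≠ o' X := by
      intro h; exact N.cpt_irrefl X o (o X) (by rw [← h] at hc; exact hc)
    have hparX : ∀ Z, N.cp Z X → o Z = o' Z := by
      intro Z hZ
      have h1 : Z ≠ X := N.cp_ne Z X hZ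
      have h2 : Z ≠ Y := by rintro rfl; exact hcpYX hZ
      exact hag Z h1 h2
    have hcX : N.cpt X o' (o X) (o' X) :=
      (N.cpt_local X o o' hparX (o X) (o' X)).mp hc
    by_cases hY : o Y = o' Y
    · -- only X differs: it's a CP-flip
      refine flip1 X o o' (fun Z hZ => ?_) hc
      by_cases hZY : Z = Y
      · exact hZY ▸ hY
      · exact hag Z hZ hZY
    · rcases htotal Y o' (o' Y) (o Y) (fun h => hY h.symm) with hYw | hYi
      · -- Y worsens from o' to o : single I-flip from o' to o
        refine hresp o' o (Relation.TransGen.single (Or.inr ⟨X, Y, hXY,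
          fun h => hneX h.symm, fun h => hY h.symm,
          fun Z h1 h2 => (hag Z h1 h2).symm, hcX, hYw, himp⟩))
      · -- Y improves too: two CP-flips through o''
        set o'' : (Z : V) → D Z := Function.update o' Y (o Y) with ho''
        have h''Y : o'' Y = o Y := Function.update_self Y (o Y) o'
        have h''ne : ∀ Z, Z ≠ Y → o'' Z = o' Z := fun Z hZ =>
          Function.update_of_ne hZ (o Y) o'
        have e1 : ImpFlip N o' o'' := by
          refine Or.inl ⟨Y, fun Z hZ => (h''ne Z hZ).symm, ?_, ?_⟩
          · rw [h''Y]; exact fun h => hY h.symm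
          · rw [h''Y]; exact hYi
        have e2 : ImpFlip N o'' o := by
          refine Or.inl ⟨X, fun Z hZ => ?_, ?_, ?_⟩
          · by_cases hZY : Z = Y
            · subst hZY; exact h''Y
            · rw [h''ne Z hZY]; exact (hag Z hZ hZY).symm
          · rw [h''ne X hXY]; exact fun h => hneX h.symm
          · rw [h''ne X hXY]
            refine (N.cpt_local X o' o'' (fun Z hZ => ?_) (o X) (o' X)).mp hcX
            have : Z ≠ Y := by rintro rfl; exact hcpYX hZ
            exact (h''ne Z this).symm
        exact hresp o' o (Relation.TransGen.head e1 (Relation.TransGen.single e2))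
  refine ⟨fun X o o' hag hc => flip1 X o o' hag hc, ?_, ?_⟩
  · intro X Y o o' hiarc hag hc
    exact flip2 X Y o o' (N.iarc_ne X Y hiarc) (N.iarc_indep X Y hiarc).1
      (N.iarc_indep X Y hiarc).2 (Or.inl hiarc) hag hc
  · intro X Y o o' hcit hag hc
    have hci := N.cit_ci X Y o hcit
    have hsel := N.sel_not_endpoint X Y hci
    have hcit' : N.cit X Y o' := by
      refine (N.cit_local X Y o o' (fun Z hZ => ?_)).mp hcit
      exact hag Z (fun h => hsel.1 (h ▸ hZ)) (fun h => hsel.2 (h ▸ hZ))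
    exact flip2 X Y o o' (N.ci_ne X Y hci) (N.ci_indep X Y hci).1
      (N.ci_indep X Y hci).2 (Or.inr hcit') hag hc
end

section
/- Let N be a TCP-net such that every simple cycle in the undirected graph underlying its dependency graph N* contains two edges that are directed in N* and point in opposite directions along that cycle (one clockwise and one counter-clockwise). Then N is conditionally acyclic. -/
universe u v

variable {V : Type u} {D : V → Type v}

/-- Labels for the edges of a cycle in the underlying undirected multigraph
of the dependency graph: a directed edge traversed forwards, a directed edge
traversed backwards, or an undirected ci-arc. -/
inductive EdgeLab : Type
  | fwd | bwd | und

/-- `v`, `lab` describe a simple cycle in the undirected multigraph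
underlying the dependency graph of `N`: `v` lists its (distinct) vertices and
`lab i` records whether the edge between `v i` and `v (i+1)` is a directed
edge of `N*` pointing forwards along the traversal, a directed edge pointing
backwards, or a ci-arc.  For length 2 the two parallel edges must be distinct
edges of the multigraph. -/
def IsUndCycle (N : TCPNet V D) {n : ℕ} (v : Fin n → V) (lab : Fin n → EdgeLab) : Prop :=
  1 ≤ n ∧ Function.Injective v ∧
    (∀ i, lab i = EdgeLab.fwd → N.dirEdge (v i) (v (finNext i))) ∧
    (∀ i, lab i = EdgeLab.bwd → N.dirEdge (v (finNext i)) (v i)) ∧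
    (∀ i, lab i = EdgeLab.und → N.ci (v i) (v (finNext i))) ∧
    (n = 2 → ∀ i j : Fin n, i ≠ j →
      (lab i = EdgeLab.fwd → lab j ≠ EdgeLab.bwd) ∧
      (lab i = EdgeLab.und → lab j ≠ EdgeLab.und))

section Aux

/-- Extract a path as a `Fin`-indexed function from `TransGen`. -/
lemma exists_path {α : Type*} {r : α → α → Prop} {a b : α} (h : Relation.TransGen r a b) :
    ∃ n : ℕ, 0 < n ∧ ∃ v : Fin (n + 1) → α, v 0 = a ∧ v (Fin.last n) = b ∧
      ∀ i : Fin n, r (v i.castSucc) (v i.succ) := by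
  induction h with
  | @single b hab =>
      exact ⟨1, Nat.one_pos, ![a, b], rfl, rfl, by
        intro i
        have : i = 0 := Subsingleton.elim _ _
        subst this
        simpa using hab⟩
  | @tail b c _ hbc ih =>
      obtain ⟨n, hn, v, h0, hl, he⟩ := ih
      refine ⟨n + 1, by omega, Fin.snoc v c, by
        rw [show (0 : Fin (n+2)) = (0 : Fin (n+1)).castSucc by rfl, Fin.snoc_castSucc, h0],
        by simp, ?_⟩
      intro i
      rcases eq_or_lt_of_le (Nat.lt_succ_iff.mp i.isLt) with hi | hi
      · have hic : i.castSucc = (Fin.last n).castSucc := by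
          ext; simpa using hi
        have his : i.succ = Fin.last (n + 1) := by
          ext; simp [hi]
        rw [hic, his, Fin.snoc_castSucc, Fin.snoc_last, hl]
        exact hbc
      · have h1 : (i.castSucc : Fin (n + 2)) = ((⟨i, by omega⟩ : Fin (n+1)).castSucc) := by
          ext; rfl
        have h2 : (i.succ : Fin (n + 2)) = ((⟨i+1, by omega⟩ : Fin (n+1)).castSucc) := by
          ext; rfl
        rw [h1, h2, Fin.snoc_castSucc, Fin.snoc_castSucc]
        have := he ⟨i, hi⟩
        convert this using 2 <;> ext <;> rfl

/-- Extract a (not nec. simple) cycle from a `TransGen` loop. -/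
lemma exists_cycle {α : Type*} {r : α → α → Prop} {a : α} (h : Relation.TransGen r a a) :
    ∃ n : ℕ, 0 < n ∧ ∃ v : Fin n → α, ∀ i, r (v i) (v (finNext i)) := by
  obtain ⟨n, hn, v, h0, hl, he⟩ := exists_path h
  refine ⟨n, hn, fun i => v i.castSucc, ?_⟩
  intro i
  show r (v i.castSucc) (v (finNext i).castSucc)
  by_cases hi : (i : ℕ) + 1 < n
  · have h1 : (finNext i).castSucc = (⟨i, by omega⟩ : Fin n).succ := by
      ext; simp [finNext, Nat.mod_eq_of_lt hi]
    have h2 : i.castSucc = ((⟨i, by omega⟩ : Fin n)).castSucc := by ext; rfl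
    rw [h2, h1]; exact he _
  · have hin : (i : ℕ) + 1 = n := by omega
    have h1 : (finNext i).castSucc = (0 : Fin (n+1)) := by
      ext; simp [finNext, hin]
    have h2 : ((⟨i, i.isLt⟩ : Fin n)).succ = Fin.last n := by ext; simpa using hin
    rw [h1, h0, ← hl, ← h2]
    have h3 : i.castSucc = ((⟨i, i.isLt⟩ : Fin n)).castSucc := by ext; rfl
    rw [h3]; exact he _

end Aux

/-- Extract a simple cycle (injective vertex list, length ≥ 2) from a loop. -/
lemma exists_simple_cycle {α : Type*} {r : α → α → Prop} (hirr : ∀ a, ¬ r a a)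
    {a : α} (h : Relation.TransGen r a a) :
    ∃ n : ℕ, 2 ≤ n ∧ ∃ v : Fin n → α, Function.Injective v ∧
      ∀ i, r (v i) (v (finNext i)) := by
  classical
  have hQ : ∃ n : ℕ, 0 < n ∧ ∃ v : Fin n → α, ∀ i, r (v i) (v (finNext i)) :=
    exists_cycle h
  set n₀ := Nat.find hQ with hn₀
  obtain ⟨hpos, v, hv⟩ := Nat.find_spec hQ
  -- shortcut lemma
  have key : ∀ i j : Fin n₀, (i : ℕ) < (j : ℕ) → v i ≠ v j := by
    intro i j hij heq
    set m := (j : ℕ) - (i : ℕ) with hm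
    have hm0 : 0 < m := by omega
    have hmn : m < n₀ := by have := j.isLt; omega
    have : 0 < m ∧ ∃ v' : Fin m → α, ∀ k, r (v' k) (v' (finNext k)) := by
      refine ⟨hm0, fun k => v ⟨(i : ℕ) + (k : ℕ), by have := j.isLt; omega⟩, ?_⟩
      intro k
      have hk := k.isLt
      have hfk := (finNext k).isLt
      have hjn := j.isLt
      show r (v ⟨(i : ℕ) + (k : ℕ), by omega⟩)
          (v ⟨(i : ℕ) + ((finNext k : Fin m) : ℕ), by omega⟩)
      have hedge := hv ⟨(i : ℕ) + (k : ℕ), by omega⟩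
      have hfn : (finNext (⟨(i : ℕ) + (k : ℕ), by omega⟩ : Fin n₀) : ℕ)
          = (i : ℕ) + (k : ℕ) + 1 := by
        simp [finNext, Nat.mod_eq_of_lt (by omega : (i : ℕ) + (k : ℕ) + 1 < n₀)]
      by_cases hk1 : (k : ℕ) + 1 < m
      · have h1 : (⟨(i : ℕ) + ((finNext k : Fin m) : ℕ), by omega⟩ : Fin n₀)
            = finNext (⟨(i : ℕ) + (k : ℕ), by omega⟩ : Fin n₀) := by
          ext
          simp [finNext, Nat.mod_eq_of_lt hk1,
            Nat.mod_eq_of_lt (by omega : (i : ℕ) + (k : ℕ) + 1 < n₀)]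
          omega
        rw [h1]
        exact hedge
      · have hk2 : (k : ℕ) + 1 = m := by omega
        have h1 : ((finNext k : Fin m) : ℕ) = 0 := by simp [finNext, hk2]
        have h2 : (⟨(i : ℕ) + ((finNext k : Fin m) : ℕ), by omega⟩ : Fin n₀) = i := by
          ext; simp [h1]
        rw [h2, heq]
        have h3 : j = finNext (⟨(i : ℕ) + (k : ℕ), by omega⟩ : Fin n₀) := by
          ext; rw [hfn]; omega
        have h4 := congrArg v h3
        rw [h4]
        exact hedge
    exact Nat.find_min hQ hmn this
  have hinj : Function.Injective v := by
    intro i j hij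
    by_contra hne
    rcases lt_trichotomy (i : ℕ) (j : ℕ) with hlt | heq | hgt
    · exact key i j hlt hij
    · exact hne (Fin.ext heq)
    · exact key j i hgt hij.symm
  refine ⟨n₀, ?_, v, hinj, hv⟩
  by_contra hlt
  have h1 : n₀ = 1 := by omega
  have := hv ⟨0, hpos⟩
  have h2 : finNext (⟨0, hpos⟩ : Fin n₀) = ⟨0, hpos⟩ := by
    ext; simp [finNext, h1]
  rw [h2] at this
  exact hirr _ this


/-- if every simple cycle in the undirected graph underlying
the dependency graph of `N` contains two edges that are directed in `N*` and
point in opposite directions along the cycle, then `N` is conditionally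
acyclic. -/
theorem stmt17 [Fintype V] [∀ X, Fintype (D X)] [∀ X, Nontrivial (D X)]
    (N : TCPNet V D)
    (h : ∀ (n : ℕ) (v : Fin n → V) (lab : Fin n → EdgeLab),
      IsUndCycle N v lab →
        (∃ i, lab i = EdgeLab.fwd) ∧ (∃ j, lab j = EdgeLab.bwd)) :
    N.CondAcyclic := by
  classical
  intro w X hT
  have hirr : ∀ a, ¬ N.wEdge w a a := by
    intro a ha
    rcases ha with hd | hc
    · rcases hd with hcp | hi | ⟨W, hciW, hsel⟩
      · exact N.cp_ne a a hcp rfl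
      · exact N.iarc_ne a a hi rfl
      · exact (N.sel_not_endpoint a W hciW).1 hsel
    · exact N.ci_ne a a (N.cit_ci a a w hc) rfl
  obtain ⟨n, hn2, v, hinj, hv⟩ := exists_simple_cycle hirr hT
  set lab : Fin n → EdgeLab := fun i =>
    if N.dirEdge (v i) (v (finNext i)) then EdgeLab.fwd else EdgeLab.und with hlab
  have hlabne : ∀ i, lab i ≠ EdgeLab.bwd := by
    intro i
    by_cases hd : N.dirEdge (v i) (v (finNext i)) <;> simp [hlab, hd]
  have hund : ∀ i, lab i = EdgeLab.und → N.cit (v i) (v (finNext i)) w := by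
    intro i hi
    by_cases hd : N.dirEdge (v i) (v (finNext i))
    · simp [hlab, hd] at hi
    · rcases hv i with h' | h'
      · exact absurd h' hd
      · exact h'
  have hcycle : IsUndCycle N v lab := by
    refine ⟨by omega, hinj, ?_, ?_, ?_, ?_⟩
    · intro i hi
      by_cases hd : N.dirEdge (v i) (v (finNext i))
      · exact hd
      · simp [hlab, hd] at hi
    · intro i hi
      exact absurd hi (hlabne i)
    · intro i hi
      exact N.cit_ci _ _ _ (hund i hi)
    · intro hn2' i j hij
      refine ⟨fun _ hj => hlabne j hj, fun hi hj => ?_⟩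
      have h1 := hund i hi
      have h2 := hund j hj
      have hne : (i : ℕ) ≠ (j : ℕ) := fun hh => hij (Fin.ext hh)
      have hji : finNext i = j := by
        ext
        have hi2 := i.isLt
        have hj2 := j.isLt
        simp only [finNext, hn2'] at *
        omega
      have hij' : finNext j = i := by
        ext
        have hi2 := i.isLt
        have hj2 := j.isLt
        simp only [finNext, hn2'] at *
        omega
      rw [hji] at h1
      rw [hij'] at h2
      exact N.cit_antisymm _ _ _ h1 h2
  obtain ⟨_, ⟨j, hj⟩⟩ := h n v lab hcycle
  exact hlabne j hj
end
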